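/- arXiv:2308.05180 — 4 statements merged into one kernel-verified Lean document; each statement's English description precedes it below -/
import Mathlib

section
/- Two-sided bound for localized kernel integrals in the second argument: Let ψ : ℝ → [0,∞) be an even essentially bounded function with nonempty support contained in [−1,1], and let α < d. For x, y ∈ Ω define ψ_{δ,α}(x,y) := η_δ(x)^{−d}·ψ(|y−x|/η_δ(x))·(|y−x|/η_δ(x))^{−α} and Ψ_{δ,α}(x) := ∫_Ω ψ_{δ,α}(y,x) dy. Then for every x ∈ Ω, (1 + κ₁δ)^{−1}·∫_{B(0,1)} ψ(|z|)·|z|^{−α} dz ≤ Ψ_{δ,α}(x) ≤ (1 − κ₁δ)^{−1}·∫_{B(0,1)} ψ(|z|)·|z|^{−α} dz. -/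
open MeasureTheory Real Set Filter Metric
open Set.Notation
open scoped ENNReal NNReal Topology Pointwise

noncomputable section

/-- Euclidean space `ℝ^d`. -/
abbrev Rd (d : ℕ) : Type := EuclideanSpace ℝ (Fin d)

/-- Rescaled heterogeneous localization function `η_δ(x) = δ·q(λ(x))`. -/
def etaD {d : ℕ} (δ : ℝ) (q : ℝ → ℝ) (lam : Rd d → ℝ) (x : Rd d) : ℝ := δ * q (lam x)

/-- Weighted boundary-localized mollifier kernel `ψ_{δ,α}(x,y)`. -/
def psiDA {d : ℕ} (δ α : ℝ) (q : ℝ → ℝ) (lam : Rd d → ℝ) (ψ : ℝ → ℝ) (x y : Rd d) : ℝ :=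
  (etaD δ q lam x) ^ (-(d : ℝ)) * ψ (‖y - x‖ / etaD δ q lam x) *
    (‖y - x‖ / etaD δ q lam x) ^ (-α)

lemma det_id_add_smulRight {E : Type*} [NormedAddCommGroup E] [NormedSpace ℝ E]
    [FiniteDimensional ℝ E] (f : E →L[ℝ] ℝ) (u : E) :
    (ContinuousLinearMap.id ℝ E + f.smulRight u).det = 1 + f u := by
  classical
  let b := Module.finBasis ℝ E
  show LinearMap.det _ = _
  rw [← LinearMap.det_toMatrix b]
  have hM : (LinearMap.toMatrix b b) ((ContinuousLinearMap.id ℝ E + f.smulRight u : E →L[ℝ] E) : E →ₗ[ℝ] E)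
      = 1 + Matrix.replicateCol Unit (fun i => b.repr u i) * Matrix.replicateRow Unit (fun j => f (b j)) := by
    ext i j
    rw [LinearMap.toMatrix_apply]
    have happ : ((ContinuousLinearMap.id ℝ E + f.smulRight u : E →L[ℝ] E) : E →ₗ[ℝ] E) (b j)
        = b j + f (b j) • u := by simp
    rw [happ, map_add, _root_.map_smul]
    simp only [Finsupp.coe_add, Pi.add_apply, Finsupp.coe_smul, Pi.smul_apply, smul_eq_mul,
      Module.Basis.repr_self, Matrix.add_apply, Matrix.one_apply, Matrix.mul_apply, Matrix.replicateCol_apply,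
      Matrix.replicateRow_apply, Finset.univ_unique, Finset.sum_singleton]
    rw [Finsupp.single_apply]
    by_cases h : i = j
    · simp [h, mul_comm]
    · have h' : ¬ j = i := fun hji => h hji.symm
      simp [h, h', mul_comm]
  rw [hM, Matrix.det_one_add_replicateCol_mul_replicateRow]
  congr 1
  rw [dotProduct]
  conv_rhs => rw [← b.sum_repr u]
  rw [map_sum]
  refine Finset.sum_congr rfl fun j _ => ?_
  rw [_root_.map_smul, smul_eq_mul, mul_comm]

lemma image_null_of_lipschitzOnWith {E : Type*} [NormedAddCommGroup E] [NormedSpace ℝ E]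
    [FiniteDimensional ℝ E] [MeasurableSpace E] [BorelSpace E]
    (μ : Measure E) [μ.IsAddHaarMeasure] {L : ℝ≥0} {f : E → E} {s : Set E}
    (hf : LipschitzOnWith L f s) (hs : μ s = 0) : μ (f '' s) = 0 := by
  set A : E →L[ℝ] E := 0 with hA
  set m : ℝ≥0 := Real.toNNReal |A.det| + 1 with hm
  have hmlt : ENNReal.ofReal |A.det| < (m : ℝ≥0∞) := by
    rw [ENNReal.ofReal, hm]
    exact_mod_cast lt_add_one _
  obtain ⟨ε, hε, hεpos⟩ :=
    ((MeasureTheory.addHaar_image_le_mul_of_det_lt μ A hmlt).and self_mem_nhdsWithin).exists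
  set c : ℝ≥0 := ε / (L + 1) with hc
  have hL1 : (0:ℝ≥0) < L + 1 := by positivity
  have hcpos : 0 < c := by
    rw [hc]
    exact div_pos hεpos hL1
  have hcL : c * L ≤ ε := by
    rw [hc, div_mul_eq_mul_div, div_le_iff₀ hL1]
    exact mul_le_mul_right (le_add_right le_rfl) ε
  have happrox : ApproximatesLinearOn (fun y => (c:ℝ) • f y) A s ε := by
    intro y hy z hz
    simp only [hA, ContinuousLinearMap.zero_apply, sub_zero, ← smul_sub, norm_smul]
    have h1 : ‖f y - f z‖ ≤ (L:ℝ) * ‖y - z‖ := by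
      have := LipschitzOnWith.dist_le_mul hf y hy z hz
      simpa [dist_eq_norm] using this
    have hcc : ‖(c:ℝ)‖ = (c:ℝ) := by
      rw [Real.norm_eq_abs, abs_of_nonneg c.coe_nonneg]
    rw [hcc]
    calc (c:ℝ) * ‖f y - f z‖ ≤ (c:ℝ) * ((L:ℝ) * ‖y - z‖) := by
          exact mul_le_mul_of_nonneg_left h1 c.coe_nonneg
      _ = ((c * L : ℝ≥0) : ℝ) * ‖y - z‖ := by push_cast; ring
      _ ≤ (ε : ℝ) * ‖y - z‖ := by
          apply mul_le_mul_of_nonneg_right _ (norm_nonneg _)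
          exact_mod_cast hcL
  have himg : μ ((fun y => (c:ℝ) • f y) '' s) = 0 := by
    have := hε s (fun y => (c:ℝ) • f y) happrox
    simpa [hs] using this
  have himg_eq : f '' s = ((c:ℝ))⁻¹ • ((fun y => (c:ℝ) • f y) '' s) := by
    ext z
    simp only [Set.mem_smul_set, Set.mem_image]
    constructor
    · rintro ⟨y, hy, rfl⟩
      exact ⟨(c:ℝ) • f y, ⟨y, hy, rfl⟩, by
        rw [smul_smul, inv_mul_cancel₀ (by exact_mod_cast hcpos.ne'), one_smul]⟩
    · rintro ⟨w, ⟨y, hy, rfl⟩, rfl⟩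
      exact ⟨y, hy, by
        rw [smul_smul, inv_mul_cancel₀ (by exact_mod_cast hcpos.ne'), one_smul]⟩
  rw [himg_eq, Measure.addHaar_smul, himg, mul_zero]

set_option maxHeartbeats 4000000 in
/-- two-sided bound for localized kernel integrals in the second argument. -/
theorem statement_2 {d : ℕ} (hd : 1 ≤ d)
    -- Ω : bounded open connected (Lipschitz) domain
    (Ω : Set (Rd d)) (hΩo : IsOpen Ω) (hΩne : Ω.Nonempty)
    (hΩb : Bornology.IsBounded Ω) (hΩc : IsConnected Ω)
    -- (A_λ)
    (lam : Rd d → ℝ) (κ0 κ1 : ℝ) (hκ0 : 1 ≤ κ0) (hκ1 : 0 < κ1)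
    (hlam_nonneg : ∀ x ∈ closure Ω, 0 ≤ lam x)
    (hlam_lb : ∀ x ∈ closure Ω, κ0⁻¹ * Metric.infDist x (frontier Ω) ≤ lam x)
    (hlam_ub : ∀ x ∈ closure Ω, lam x ≤ κ0 * Metric.infDist x (frontier Ω))
    (hlam_lip : ∀ x ∈ Ω, ∀ y ∈ Ω, |lam x - lam y| ≤ κ1 * ‖x - y‖)
    -- (A_q)
    (q : ℝ → ℝ) (Cq cq : ℝ) (hq_C1 : ContDiff ℝ 1 q) (hq0 : q 0 = 0)
    (hq_pos : ∀ r : ℝ, 0 < r → 0 < q r ∧ q r ≤ r)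
    (hq_deriv : ∀ r : ℝ, 0 ≤ r → 0 ≤ deriv q r ∧ deriv q r ≤ 1)
    (hcq : 0 < cq) (hq_deriv_pos : ∀ r ∈ Set.Ioc (0:ℝ) cq, 0 < deriv q r)
    (hCq : 1 ≤ Cq) (hq_dbl : ∀ r : ℝ, 0 < r → q (2 * r) ≤ Cq * q r)
    -- (A_δ)
    (δ : ℝ) (hδ : 0 < δ)
    (hδ0 : δ < 1 / (3 * max 1 (max κ1 (Cq * κ0 ^ Real.logb 2 Cq))))
    -- ψ : even, essentially bounded, nonempty support contained in [-1,1]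
    (ψ : ℝ → ℝ) (hψ_nonneg : ∀ t, 0 ≤ ψ t) (hψ_even : ∀ t, ψ (-t) = ψ t)
    (hψ_bdd : ∃ M, ∀ t, ψ t ≤ M)
    (hψ_supp_ne : (Function.support ψ).Nonempty)
    (hψ_supp : Function.support ψ ⊆ Set.Icc (-1) 1)
    -- exponent
    (α : ℝ) (hα : α < d) :
    ∀ x ∈ Ω,
      ((1 + κ1 * δ)⁻¹ * ∫ z in Metric.ball (0 : Rd d) 1, ψ ‖z‖ * ‖z‖ ^ (-α)
          ≤ ∫ y in Ω, psiDA δ α q lam ψ y x) ∧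
      (∫ y in Ω, psiDA δ α q lam ψ y x
          ≤ (1 - κ1 * δ)⁻¹ * ∫ z in Metric.ball (0 : Rd d) 1, ψ ‖z‖ * ‖z‖ ^ (-α)) := by
  intro x hx
  have hκ0pos : (0:ℝ) < κ0 := lt_of_lt_of_le one_pos hκ0
  have hCqpos : (0:ℝ) < Cq := lt_of_lt_of_le one_pos hCq
  set M : ℝ := max 1 (max κ1 (Cq * κ0 ^ Real.logb 2 Cq)) with hMdef
  have hM1 : (1:ℝ) ≤ M := le_max_left _ _
  have hMpos : (0:ℝ) < M := lt_of_lt_of_le one_pos hM1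
  have hδM : δ * M < 1/3 := by
    have h3M : (0:ℝ) < 3 * M := by linarith
    rw [lt_div_iff₀ h3M] at hδ0
    linarith
  set K : ℝ := κ1 * δ with hKdef
  have hK0 : 0 < K := mul_pos hκ1 hδ
  have hK3 : K < 1/3 := by
    have hκM : κ1 ≤ M := le_trans (le_max_left _ _) (le_max_right _ _)
    have hKM : K ≤ δ * M := by
      rw [hKdef, mul_comm]
      exact mul_le_mul_of_nonneg_left hκM hδ.le
    linarith
  have h1K : (0:ℝ) < 1 - K := by linarith
  have h1K' : (0:ℝ) < 1 + K := by linarith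
  haveI : Nontrivial (Rd d) := by
    refine ⟨0, EuclideanSpace.single (⟨0, hd⟩ : Fin d) (1:ℝ), fun h => ?_⟩
    have h2 := congrArg (fun v : Rd d => v (⟨0, hd⟩ : Fin d)) h
    simp [EuclideanSpace.single_apply] at h2
  -- frontier is nonempty
  have hfr_ne : (frontier Ω).Nonempty := by
    rw [nonempty_frontier_iff]
    refine ⟨hΩne, fun huniv => ?_⟩
    obtain ⟨R, hR⟩ := hΩb.subset_closedBall 0
    have hR0 : 0 ≤ R := by
      obtain ⟨z, hz⟩ := hΩne
      exact le_trans dist_nonneg (mem_closedBall.mp (hR hz))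
    obtain ⟨v, hv⟩ := exists_ne (0 : Rd d)
    set w : Rd d := ((R+1)/‖v‖) • v with hwdef
    have hvn : (0:ℝ) < ‖v‖ := norm_pos_iff.mpr hv
    have hwn : ‖w‖ = R + 1 := by
      rw [hwdef, norm_smul, Real.norm_eq_abs, abs_div, abs_of_nonneg (by linarith : (0:ℝ) ≤ R+1),
        abs_of_nonneg (norm_nonneg v)]
      field_simp
    have hw : w ∈ Ω := huniv ▸ mem_univ w
    have hwR := hR hw
    rw [mem_closedBall, dist_zero_right, hwn] at hwR
    linarith
  have hinfd : ∀ y ∈ Ω, 0 < Metric.infDist y (frontier Ω) := by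
    intro y hy
    refine (IsClosed.notMem_iff_infDist_pos isClosed_frontier hfr_ne).mp ?_
    rw [hΩo.frontier_eq]
    exact fun hc => hc.2 hy
  have hlam_posΩ : ∀ y ∈ Ω, 0 < lam y := by
    intro y hy
    have h1 := hlam_lb y (subset_closure hy)
    have h2 := hinfd y hy
    have h3 : 0 < κ0⁻¹ * Metric.infDist y (frontier Ω) := mul_pos (inv_pos.mpr hκ0pos) h2
    linarith
  -- extend lam to a global Lipschitz function, nonnegative version
  have hlamlip : LipschitzOnWith (Real.toNNReal κ1) lam Ω := by
    rw [lipschitzOnWith_iff_dist_le_mul]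
    intro a ha b hb
    rw [Real.dist_eq, dist_eq_norm, Real.coe_toNNReal κ1 hκ1.le]
    exact hlam_lip a ha b hb
  obtain ⟨lt0, hlt0lip, hlt0eq⟩ := hlamlip.extend_real
  set lamp : Rd d → ℝ := fun y => max (lt0 y) 0 with hlampdef
  have hlamplip : LipschitzWith (Real.toNNReal κ1) lamp := hlt0lip.max_const 0
  have hlampeq : ∀ y ∈ Ω, lamp y = lam y := by
    intro y hy
    simp only [hlampdef]
    rw [← hlt0eq hy]
    exact max_eq_left (hlam_nonneg y (subset_closure hy))
  have hlampnn : ∀ y, 0 ≤ lamp y := fun y => le_max_right _ _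
  -- q is 1-Lipschitz on [0, ∞)
  have hqdiff : ∀ r : ℝ, DifferentiableAt ℝ q r := fun r =>
    (hq_C1.differentiable one_ne_zero).differentiableAt
  have hqlip : ∀ a ∈ Set.Ici (0:ℝ), ∀ b ∈ Set.Ici (0:ℝ), |q b - q a| ≤ |b - a| := by
    intro a ha b hb
    have h := (convex_Ici (0:ℝ)).norm_image_sub_le_of_norm_deriv_le
      (fun r _ => hqdiff r)
      (fun r hr => by
        rw [Real.norm_eq_abs]
        rcases hq_deriv r hr with ⟨h1, h2⟩
        rw [abs_of_nonneg h1]; exact h2) ha hb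
    simpa [Real.norm_eq_abs] using h
  -- the localization function
  set eta : Rd d → ℝ := fun y => δ * q (lamp y) with hetadef
  have hetaeqD : ∀ y ∈ Ω, eta y = etaD δ q lam y := by
    intro y hy
    simp only [hetadef, etaD]
    rw [hlampeq y hy]
  have hetalip : LipschitzWith (Real.toNNReal K) eta := by
    apply LipschitzWith.of_dist_le_mul
    intro a b
    rw [Real.dist_eq, Real.coe_toNNReal K hK0.le]
    have h1 : |q (lamp a) - q (lamp b)| ≤ |lamp a - lamp b| :=
      hqlip _ (hlampnn b) _ (hlampnn a)
    have h2 : dist (lamp a) (lamp b) ≤ κ1 * dist a b := by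
      have h := hlamplip.dist_le_mul a b
      rwa [Real.coe_toNNReal κ1 hκ1.le] at h
    rw [Real.dist_eq] at h2
    calc |eta a - eta b| = δ * |q (lamp a) - q (lamp b)| := by
          simp only [hetadef]
          rw [← mul_sub, abs_mul, abs_of_pos hδ]
      _ ≤ δ * |lamp a - lamp b| := mul_le_mul_of_nonneg_left h1 hδ.le
      _ ≤ δ * (κ1 * dist a b) := mul_le_mul_of_nonneg_left h2 hδ.le
      _ = K * dist a b := by rw [hKdef]; ring
  have hetacont : Continuous eta := hetalip.continuous
  have hetaposΩ : ∀ y ∈ Ω, 0 < eta y := by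
    intro y hy
    simp only [hetadef]
    rw [hlampeq y hy]
    exact mul_pos hδ (hq_pos _ (hlam_posΩ y hy)).1
  -- monotonicity and doubling
  have hqmono : MonotoneOn q (Set.Ici (0:ℝ)) := by
    apply monotoneOn_of_deriv_nonneg (convex_Ici 0) hq_C1.continuous.continuousOn
    · exact fun r _ => (hqdiff r).differentiableWithinAt
    · intro r hr
      rw [interior_Ici] at hr
      exact (hq_deriv r (le_of_lt hr)).1
  have hdbl : ∀ n : ℕ, ∀ r : ℝ, 0 < r → q (2^n * r) ≤ Cq^n * q r := by
    intro n
    induction n with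
    | zero => intro r _; simp
    | succ n ih =>
      intro r hr
      have h2 : (2:ℝ)^(n+1) * r = 2 * (2^n * r) := by ring
      rw [h2, pow_succ]
      calc q (2 * (2^n * r)) ≤ Cq * q (2^n * r) := hq_dbl _ (by positivity)
        _ ≤ Cq * (Cq^n * q r) := mul_le_mul_of_nonneg_left (ih r hr) hCqpos.le
        _ = Cq^n * Cq * q r := by ring
  have hqkey : ∀ r : ℝ, 0 < r → q (κ0 * r) ≤ (Cq * κ0 ^ Real.logb 2 Cq) * r := by
    intro r hr
    set n := ⌈Real.logb 2 κ0⌉₊ with hn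
    have hlogb0 : 0 ≤ Real.logb 2 κ0 := Real.logb_nonneg one_lt_two hκ0
    have hκ2n : κ0 ≤ 2^n := by
      calc κ0 = 2 ^ Real.logb 2 κ0 := (Real.rpow_logb two_pos (by norm_num) hκ0pos).symm
        _ ≤ 2 ^ ((n:ℕ):ℝ) := Real.rpow_le_rpow_of_exponent_le one_le_two (Nat.le_ceil _)
        _ = 2^n := Real.rpow_natCast 2 n
    have h1 : q (κ0 * r) ≤ q (2^n * r) := by
      apply hqmono (Set.mem_Ici.mpr (by positivity)) (Set.mem_Ici.mpr (by positivity))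
      exact mul_le_mul_of_nonneg_right hκ2n hr.le
    have h3 : (Cq:ℝ)^n ≤ Cq * κ0 ^ Real.logb 2 Cq := by
      have hnle : (n:ℝ) ≤ Real.logb 2 κ0 + 1 := le_of_lt (Nat.ceil_lt_add_one hlogb0)
      have hid : Cq ^ Real.logb 2 κ0 = κ0 ^ Real.logb 2 Cq := by
        rw [Real.rpow_def_of_pos hCqpos, Real.rpow_def_of_pos hκ0pos, Real.logb, Real.logb]
        ring_nf
      calc (Cq:ℝ)^n = Cq ^ ((n:ℕ):ℝ) := (Real.rpow_natCast Cq n).symm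
        _ ≤ Cq ^ (Real.logb 2 κ0 + 1) := Real.rpow_le_rpow_of_exponent_le hCq hnle
        _ = Cq ^ Real.logb 2 κ0 * Cq := by rw [Real.rpow_add hCqpos, Real.rpow_one]
        _ = Cq * κ0 ^ Real.logb 2 Cq := by rw [hid]; ring
    have hq2n := hdbl n r hr
    have hqr : q r ≤ r := (hq_pos r hr).2
    have hqrnn : 0 ≤ q r := (hq_pos r hr).1.le
    calc q (κ0 * r) ≤ Cq^n * q r := le_trans h1 hq2n
      _ ≤ (Cq * κ0 ^ Real.logb 2 Cq) * q r := mul_le_mul_of_nonneg_right h3 hqrnn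
      _ ≤ (Cq * κ0 ^ Real.logb 2 Cq) * r := by
          apply mul_le_mul_of_nonneg_left hqr (by positivity)
  -- interior ball
  set ρ : ℝ := Metric.infDist x (frontier Ω) with hρdef
  have hρpos : 0 < ρ := hinfd x hx
  have hballΩ : Metric.ball x ρ ⊆ Ω := by
    have hdisj : Disjoint (frontier Ω) (Metric.ball x ρ) := by
      rw [Set.disjoint_left]
      intro w hw hwb
      have h1 : ρ ≤ dist x w := Metric.infDist_le_dist_of_mem hw
      have h2 : dist w x < ρ := mem_ball.mp hwb
      rw [dist_comm] at h2
      linarith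
    have hclopen := isClopen_preimage_val hΩo hdisj
    haveI : PreconnectedSpace (Metric.ball x ρ) :=
      Subtype.preconnectedSpace (convex_ball x ρ).isPreconnected
    have hne : ((Metric.ball x ρ : Set (Rd d)) ↓∩ Ω).Nonempty := ⟨⟨x, mem_ball_self hρpos⟩, hx⟩
    have huniv := hclopen.eq_univ hne
    intro z hz
    have hz2 : (⟨z, hz⟩ : Metric.ball x ρ) ∈ (Metric.ball x ρ : Set (Rd d)) ↓∩ Ω :=
      huniv ▸ mem_univ _
    exact hz2
  have hetaxρ : eta x < ρ / 3 := by
    have h1 : eta x = δ * q (lam x) := by simp only [hetadef]; rw [hlampeq x hx]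
    have h2 : lam x ≤ κ0 * ρ := hlam_ub x (subset_closure hx)
    have h3 : q (lam x) ≤ q (κ0 * ρ) := by
      apply hqmono (Set.mem_Ici.mpr (hlam_posΩ x hx).le) (Set.mem_Ici.mpr (by positivity)) h2
    have h4 : q (κ0 * ρ) ≤ (Cq * κ0 ^ Real.logb 2 Cq) * ρ := hqkey ρ hρpos
    have h5 : Cq * κ0 ^ Real.logb 2 Cq ≤ M := le_trans (le_max_right κ1 _) (le_max_right 1 _)
    have h6 : eta x ≤ δ * (M * ρ) := by
      rw [h1]
      have h7 : q (lam x) ≤ M * ρ :=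
        le_trans h3 (le_trans h4 (mul_le_mul_of_nonneg_right h5 hρpos.le))
      exact mul_le_mul_of_nonneg_left h7 hδ.le
    have h8 : δ * (M * ρ) < (1/3) * ρ := by
      rw [← mul_assoc]
      exact mul_lt_mul_of_pos_right hδM hρpos
    linarith only [h6, h8]
  set r0 : ℝ := eta x / (1 - K) with hr0def
  have hetaxpos : 0 < eta x := hetaposΩ x hx
  have hr0pos : 0 < r0 := div_pos hetaxpos h1K
  have hr0K : r0 * (1 - K) = eta x := div_mul_cancel₀ _ h1K.ne'
  have hr0ρ : r0 < ρ := by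
    rw [hr0def, div_lt_iff₀ h1K]
    have h9 : ρ * (1/3) ≤ ρ * (1 - K) :=
      mul_le_mul_of_nonneg_left (by linarith only [hK3]) hρpos.le
    linarith only [hetaxρ, h9]
  have hcBΩ : Metric.closedBall x r0 ⊆ Ω := fun y hy =>
    hballΩ (mem_ball.mpr (lt_of_le_of_lt (mem_closedBall.mp hy) hr0ρ))
  -- the sets V, D, s and the map T
  set V : Set (Rd d) := {y | y ∈ Ω ∧ 0 < ‖y - x‖ ∧ ‖y - x‖ ≤ eta y} with hVdef
  have hVmeas : MeasurableSet V := by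
    have h1 : MeasurableSet {y : Rd d | 0 < ‖y - x‖} :=
      (isOpen_lt continuous_const ((continuous_id.sub continuous_const).norm)).measurableSet
    have h2 : MeasurableSet {y : Rd d | ‖y - x‖ ≤ eta y} :=
      (isClosed_le ((continuous_id.sub continuous_const).norm) hetacont).measurableSet
    have hVeq : V = Ω ∩ ({y | 0 < ‖y - x‖} ∩ {y | ‖y - x‖ ≤ eta y}) := by
      ext y; simp only [hVdef, Set.mem_setOf_eq, Set.mem_inter_iff, and_assoc]
    rw [hVeq]
    exact hΩo.measurableSet.inter (h1.inter h2)
  set D : Set (Rd d) := {y | DifferentiableAt ℝ eta y} with hDdef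
  have hDmeas : MeasurableSet D := measurableSet_of_differentiableAt ℝ eta
  set s : Set (Rd d) := V ∩ D with hsdef
  have hsmeas : MeasurableSet s := hVmeas.inter hDmeas
  have hVsub : V ⊆ Metric.closedBall x r0 := by
    intro y hy
    obtain ⟨hyΩ, hy0, hyle⟩ := hy
    have h := hetalip.dist_le_mul y x
    rw [Real.coe_toNNReal K hK0.le, Real.dist_eq, dist_eq_norm] at h
    have habs := abs_le.mp h
    have h1 : eta y ≤ eta x + K * ‖y - x‖ := by linarith only [habs.2]
    have h2 : (1 - K) * ‖y - x‖ ≤ eta x := by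
      have e : (1 - K) * ‖y - x‖ = ‖y - x‖ - K * ‖y - x‖ := by ring
      rw [e]
      linarith only [hyle, h1]
    rw [Metric.mem_closedBall, dist_eq_norm, hr0def, le_div_iff₀ h1K]
    rw [mul_comm]
    exact h2
  set T : Rd d → Rd d := fun y => (eta y)⁻¹ • (y - x) with hTdef
  have hTnorm : ∀ y, 0 < eta y → ‖T y‖ = ‖y - x‖ / eta y := by
    intro y hy
    simp only [hTdef]
    rw [norm_smul, Real.norm_eq_abs, abs_inv, abs_of_pos hy, inv_mul_eq_div]
  -- injectivity
  have hkey : ∀ y1 ∈ V, ∀ y2 ∈ V, T y1 = T y2 → ¬ (eta y1 < eta y2) := by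
    intro y1 h1 y2 h2 heq hlt
    obtain ⟨h1Ω, h10, h1le⟩ := h1
    obtain ⟨h2Ω, h20, h2le⟩ := h2
    have he1 := hetaposΩ y1 h1Ω
    have he2 := hetaposΩ y2 h2Ω
    have heq2 : y2 - x = (eta y2 / eta y1) • (y1 - x) := by
      have hh : (eta y2) • ((eta y2)⁻¹ • (y2 - x)) = (eta y2) • ((eta y1)⁻¹ • (y1 - x)) := by
        simp only [hTdef] at heq
        rw [heq]
      rwa [smul_inv_smul₀ he2.ne', smul_smul, ← div_eq_mul_inv] at hh
    set μr : ℝ := eta y2 / eta y1 with hμrdef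
    have hμ1 : 1 < μr := (one_lt_div he1).mpr hlt
    have hdiff : y2 - y1 = (μr - 1) • (y1 - x) := by
      have hh : y2 - y1 = (y2 - x) - (y1 - x) := by abel
      rw [hh, heq2, sub_smul, one_smul]
    have hnorm : ‖y2 - y1‖ = (μr - 1) * ‖y1 - x‖ := by
      rw [hdiff, norm_smul, Real.norm_eq_abs, abs_of_pos (by linarith)]
    have hl := hetalip.dist_le_mul y2 y1
    rw [Real.coe_toNNReal K hK0.le, Real.dist_eq, dist_eq_norm] at hl
    have h3 : eta y2 - eta y1 ≤ K * ‖y2 - y1‖ := le_trans (le_abs_self _) hl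
    have h4 : eta y2 - eta y1 = (μr - 1) * eta y1 := by
      rw [hμrdef]; field_simp
    have h5 : K * ‖y2 - y1‖ = K * (μr - 1) * ‖y1 - x‖ := by rw [hnorm]; ring
    have h6 : K * (μr - 1) * ‖y1 - x‖ ≤ K * (μr - 1) * eta y1 := by
      exact mul_le_mul_of_nonneg_left h1le (mul_nonneg hK0.le (by linarith only [hμ1]))
    have h7 : (μr - 1) * eta y1 ≤ K * (μr - 1) * eta y1 := by
      calc (μr - 1) * eta y1 = eta y2 - eta y1 := h4.symm
        _ ≤ K * ‖y2 - y1‖ := h3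
        _ = K * (μr - 1) * ‖y1 - x‖ := h5
        _ ≤ K * (μr - 1) * eta y1 := h6
    have hA : 0 < (μr - 1) * eta y1 := mul_pos (by linarith only [hμ1]) he1
    have hB : K * ((μr - 1) * eta y1) < (1/3) * ((μr - 1) * eta y1) :=
      mul_lt_mul_of_pos_right hK3 hA
    linarith only [h7, hA, hB]
  have hTinj : Set.InjOn T V := by
    intro y1 h1 y2 h2 heq
    rcases lt_trichotomy (eta y1) (eta y2) with hlt | heqe | hgt
    · exact absurd hlt (hkey y1 h1 y2 h2 heq)
    · have he1 := hetaposΩ y1 h1.1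
      have hh : (eta y1)⁻¹ • (y1 - x) = (eta y1)⁻¹ • (y2 - x) := by
        simp only [hTdef] at heq
        rw [heq, heqe]
      have hh2 := smul_right_injective (Rd d) (inv_ne_zero he1.ne') hh
      exact sub_left_injective hh2
    · exact absurd hgt (hkey y2 h2 y1 h1 heq.symm)
  -- image identification
  have hTVsub : T '' V ⊆ Metric.closedBall 0 1 \ {0} := by
    rintro z ⟨y, hyV, rfl⟩
    obtain ⟨hyΩ, hy0, hyle⟩ := hyV
    have hety := hetaposΩ y hyΩ
    have hn := hTnorm y hety
    constructor
    · rw [Metric.mem_closedBall, dist_zero_right, hn, div_le_one hety]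
      exact hyle
    · simp only [Set.mem_singleton_iff]
      intro h0
      rw [h0, norm_zero] at hn
      have hz : ‖y - x‖ = 0 := by
        field_simp at hn
        simpa using hn.symm
      linarith
  have hTVsup : Metric.closedBall (0:Rd d) 1 \ {0} ⊆ T '' V := by
    rintro z ⟨hz1, hz2⟩
    have hz0 : z ≠ 0 := fun h => hz2 (by simp [h])
    have hzn : 0 < ‖z‖ := norm_pos_iff.mpr hz0
    have hzn1 : ‖z‖ ≤ 1 := by rwa [Metric.mem_closedBall, dist_zero_right] at hz1
    set ω : Rd d := ‖z‖⁻¹ • z with hωdef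
    have hων : ‖ω‖ = 1 := by
      rw [hωdef, norm_smul, Real.norm_eq_abs, abs_inv, abs_of_pos hzn, inv_mul_cancel₀ hzn.ne']
    have hmem : ∀ r ∈ Set.Icc (0:ℝ) r0, x + r • ω ∈ Ω := by
      intro r hr
      apply hcBΩ
      rw [Metric.mem_closedBall, dist_eq_norm]
      simp only [add_sub_cancel_left]
      rw [norm_smul, Real.norm_eq_abs, abs_of_nonneg hr.1, hων, mul_one]
      exact hr.2
    set φ : ℝ → ℝ := fun r => r / eta (x + r • ω) with hφdef
    have hφcont : ContinuousOn φ (Set.Icc 0 r0) := by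
      apply ContinuousOn.div continuousOn_id
      · exact (hetacont.comp (continuous_const.add (continuous_id.smul continuous_const))).continuousOn
      · exact fun r hr => (hetaposΩ _ (hmem r hr)).ne'
    have hφ0 : φ 0 = 0 := by simp [hφdef]
    have hφr0 : 1 ≤ φ r0 := by
      have hmem0 : x + r0 • ω ∈ Ω := hmem r0 ⟨hr0pos.le, le_rfl⟩
      have hetmem : 0 < eta (x + r0 • ω) := hetaposΩ _ hmem0
      have hlipb : eta (x + r0 • ω) ≤ eta x + K * r0 := by
        have h := hetalip.dist_le_mul (x + r0 • ω) x
        rw [Real.coe_toNNReal K hK0.le, Real.dist_eq, dist_eq_norm] at h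
        have h2 : ‖x + r0 • ω - x‖ = r0 := by
          simp only [add_sub_cancel_left]
          rw [norm_smul, Real.norm_eq_abs, abs_of_nonneg hr0pos.le, hων, mul_one]
        rw [h2] at h
        have habs := abs_le.mp h
        linarith [habs.2]
      have hKr0 : eta x + K * r0 = r0 := by linear_combination -hr0K
      simp only [hφdef]
      rw [le_div_iff₀ hetmem, one_mul]
      linarith
    have hIVT := intermediate_value_Icc hr0pos.le hφcont
    have hzmem : ‖z‖ ∈ Set.Icc (φ 0) (φ r0) := ⟨by rw [hφ0]; exact hzn.le, le_trans hzn1 hφr0⟩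
    obtain ⟨r, hrI, hrφ⟩ := hIVT hzmem
    have hrpos : 0 < r := by
      rcases eq_or_lt_of_le hrI.1 with h | h
      · exfalso
        rw [← h, hφ0] at hrφ
        linarith
      · exact h
    set y : Rd d := x + r • ω with hydef
    have hyΩ : y ∈ Ω := hmem r hrI
    have hety : 0 < eta y := hetaposΩ y hyΩ
    have hyx : y - x = r • ω := by rw [hydef]; abel
    have hyxn : ‖y - x‖ = r := by
      rw [hyx, norm_smul, Real.norm_eq_abs, abs_of_nonneg hrpos.le, hων, mul_one]
    have hφry : r / eta y = ‖z‖ := hrφ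
    have hrle : ‖y - x‖ ≤ eta y := by
      rw [hyxn]
      have hre : r = ‖z‖ * eta y := by
        rw [← hφry]; field_simp
      have h9 : ‖z‖ * eta y ≤ 1 * eta y := mul_le_mul_of_nonneg_right hzn1 hety.le
      rw [one_mul] at h9
      linarith only [hre, h9]
    refine ⟨y, ⟨hyΩ, by rw [hyxn]; exact hrpos, hrle⟩, ?_⟩
    simp only [hTdef]
    rw [hyx, smul_smul, hωdef, smul_smul]
    have hcoef : (eta y)⁻¹ * r * ‖z‖⁻¹ = 1 := by
      have : (eta y)⁻¹ * r = ‖z‖ := by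
        rw [mul_comm, ← div_eq_mul_inv]; exact hφry
      rw [this, mul_inv_cancel₀ hzn.ne']
    rw [hcoef, one_smul]
  -- Lipschitz bound for T on the closed ball
  obtain ⟨y0, hy0mem, hy0min'⟩ := (isCompact_closedBall x r0).exists_isMinOn
    ⟨x, Metric.mem_closedBall_self hr0pos.le⟩ hetacont.continuousOn
  have hy0min : ∀ y ∈ Metric.closedBall x r0, eta y0 ≤ eta y := fun y hy => hy0min' hy
  set c0 : ℝ := eta y0 with hc0def
  have hc0pos : 0 < c0 := hetaposΩ y0 (hcBΩ hy0mem)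
  set L : ℝ := c0⁻¹ + K * r0 * (c0⁻¹ * c0⁻¹) with hLdef
  have hLnn : 0 ≤ L := by positivity
  have hTlipcB : LipschitzOnWith (Real.toNNReal L) T (Metric.closedBall x r0) := by
    rw [lipschitzOnWith_iff_dist_le_mul]
    intro y1 h1 y2 h2
    have he1 : 0 < eta y1 := hetaposΩ y1 (hcBΩ h1)
    have he2 : 0 < eta y2 := hetaposΩ y2 (hcBΩ h2)
    have hm1 : c0 ≤ eta y1 := hy0min y1 h1
    
    have hm2 : c0 ≤ eta y2 := hy0min y2 h2
    rw [Real.coe_toNNReal L hLnn, dist_eq_norm, dist_eq_norm]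
    have hkeyT : T y1 - T y2 = (eta y1)⁻¹ • (y1 - y2) + ((eta y1)⁻¹ - (eta y2)⁻¹) • (y2 - x) := by
      simp only [hTdef]
      module
    have hd : |eta y2 - eta y1| ≤ K * ‖y1 - y2‖ := by
      have hl := hetalip.dist_le_mul y2 y1
      rw [Real.coe_toNNReal K hK0.le, Real.dist_eq, dist_eq_norm, norm_sub_rev] at hl
      exact hl
    have hb1 : ‖(eta y1)⁻¹ • (y1 - y2)‖ ≤ c0⁻¹ * ‖y1 - y2‖ := by
      rw [norm_smul, Real.norm_eq_abs, abs_inv, abs_of_pos he1]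
      apply mul_le_mul_of_nonneg_right _ (norm_nonneg _)
      exact inv_anti₀ hc0pos hm1
    have hb2 : ‖((eta y1)⁻¹ - (eta y2)⁻¹) • (y2 - x)‖ ≤ K * r0 * (c0⁻¹ * c0⁻¹) * ‖y1 - y2‖ := by
      rw [norm_smul, Real.norm_eq_abs]
      have hy2x : ‖y2 - x‖ ≤ r0 := by rw [← dist_eq_norm]; exact mem_closedBall.mp h2
      have h21 : |(eta y1)⁻¹ - (eta y2)⁻¹| ≤ (K * ‖y1 - y2‖) * (c0⁻¹ * c0⁻¹) := by
        have e1 : (eta y1)⁻¹ - (eta y2)⁻¹ = (eta y2 - eta y1) * ((eta y1)⁻¹ * (eta y2)⁻¹) := by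
          rw [inv_sub_inv he1.ne' he2.ne', div_eq_mul_inv, mul_inv]
        rw [e1, abs_mul]
        apply mul_le_mul hd _ (abs_nonneg _) (by positivity)
        rw [abs_mul, abs_inv, abs_inv, abs_of_pos he1, abs_of_pos he2]
        apply mul_le_mul (inv_anti₀ hc0pos hm1) (inv_anti₀ hc0pos hm2)
          (by positivity) (by positivity)
      calc |(eta y1)⁻¹ - (eta y2)⁻¹| * ‖y2 - x‖
          ≤ ((K * ‖y1 - y2‖) * (c0⁻¹ * c0⁻¹)) * r0 :=
            mul_le_mul h21 hy2x (norm_nonneg _) (by positivity)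
        _ = K * r0 * (c0⁻¹ * c0⁻¹) * ‖y1 - y2‖ := by ring
    calc ‖T y1 - T y2‖
        = ‖(eta y1)⁻¹ • (y1 - y2) + ((eta y1)⁻¹ - (eta y2)⁻¹) • (y2 - x)‖ := by rw [hkeyT]
      _ ≤ ‖(eta y1)⁻¹ • (y1 - y2)‖ + ‖((eta y1)⁻¹ - (eta y2)⁻¹) • (y2 - x)‖ := norm_add_le _ _
      _ ≤ c0⁻¹ * ‖y1 - y2‖ + K * r0 * (c0⁻¹ * c0⁻¹) * ‖y1 - y2‖ := add_le_add hb1 hb2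
      _ = L * ‖y1 - y2‖ := by rw [hLdef]; ring
  -- null sets
  have hDae : ∀ᵐ y : Rd d, DifferentiableAt ℝ eta y := hetalip.ae_differentiableAt
  have hVDnull : volume (V \ D) = 0 := by
    have h0 : volume {y : Rd d | ¬ DifferentiableAt ℝ eta y} = 0 := ae_iff.mp hDae
    apply measure_mono_null _ h0
    intro y hy
    exact hy.2
  have hTVDnull : volume (T '' (V \ D)) = 0 :=
    image_null_of_lipschitzOnWith volume
      (hTlipcB.mono (subset_trans Set.diff_subset hVsub)) hVDnull
  have h0null : volume ({(0:Rd d)} : Set (Rd d)) = 0 := by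
    have hsp : ({(0:Rd d)} : Set (Rd d)) = Metric.sphere (0:Rd d) 0 := by
      ext w
      simp [Metric.mem_sphere]
    rw [hsp]
    exact Measure.addHaar_sphere volume 0 0
  have hxnull : volume ({x} : Set (Rd d)) = 0 := by
    have hsp : ({x} : Set (Rd d)) = Metric.sphere x 0 := by
      ext w
      simp [Metric.mem_sphere]
    rw [hsp]
    exact Measure.addHaar_sphere volume x 0
  -- derivative of T
  set Dη : Rd d → (Rd d →L[ℝ] ℝ) := fun y => fderiv ℝ eta y with hDηdef
  set T' : Rd d → (Rd d →L[ℝ] Rd d) := fun y =>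
    (eta y)⁻¹ • ContinuousLinearMap.id ℝ (Rd d) + ((-(eta y ^ 2)⁻¹) • Dη y).smulRight (y - x)
    with hT'def
  have hT'at : ∀ y ∈ s, HasFDerivAt T (T' y) y := by
    intro y hy
    have hdiffy : DifferentiableAt ℝ eta y := hy.2
    have hne : eta y ≠ 0 := (hetaposΩ y hy.1.1).ne'
    have h3 : HasFDerivAt (fun z => (eta z)⁻¹) ((-(eta y ^ 2)⁻¹) • Dη y) y := by
      have hinv : HasDerivAt (fun t : ℝ => t⁻¹) (-(eta y ^ 2)⁻¹) (eta y) := hasDerivAt_inv hne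
      exact hinv.comp_hasFDerivAt y hdiffy.hasFDerivAt
    have h4 : HasFDerivAt (fun z : Rd d => z - x) (ContinuousLinearMap.id ℝ (Rd d)) y :=
      (hasFDerivAt_id y).sub_const x
    have h5 := h3.smul h4
    exact h5
  -- the scalar function c
  set cf : Rd d → ℝ := fun y => (eta y)⁻¹ * (Dη y) (y - x) with hcfdef
  have hcfK : ∀ y ∈ s, |cf y| ≤ K := by
    intro y hy
    obtain ⟨⟨hyΩ, hy0, hyle⟩, hyD⟩ := hy
    have hety := hetaposΩ y hyΩ
    have hDnorm : ‖Dη y‖ ≤ K := by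
      have h := HasFDerivAt.le_of_lipschitz (hyD.hasFDerivAt) hetalip
      rwa [Real.coe_toNNReal K hK0.le] at h
    have h1 : |(Dη y) (y - x)| ≤ K * eta y := by
      calc |(Dη y) (y - x)| = ‖(Dη y) (y - x)‖ := (Real.norm_eq_abs _).symm
        _ ≤ ‖Dη y‖ * ‖y - x‖ := (Dη y).le_opNorm (y - x)
        _ ≤ K * eta y := mul_le_mul hDnorm hyle (norm_nonneg _) hK0.le
    simp only [hcfdef]
    rw [abs_mul, abs_inv, abs_of_pos hety]
    calc (eta y)⁻¹ * |(Dη y) (y - x)| ≤ (eta y)⁻¹ * (K * eta y) :=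
          mul_le_mul_of_nonneg_left h1 (inv_nonneg.mpr hety.le)
      _ = K := by field_simp
  -- determinant computation
  have hdet : ∀ y ∈ s, (T' y).det = ((eta y)⁻¹)^d * (1 - cf y) := by
    intro y hy
    have hety := hetaposΩ y hy.1.1
    have hne : eta y ≠ 0 := hety.ne'
    have hrw : T' y = (eta y)⁻¹ • (ContinuousLinearMap.id ℝ (Rd d)
        + ((-(eta y)⁻¹ • Dη y)).smulRight (y - x)) := by
      refine ContinuousLinearMap.ext fun v => ?_
      have lhs1 : (T' y) v = (eta y)⁻¹ • v + (-(eta y ^ 2)⁻¹ * ((Dη y) v)) • (y - x) := by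
        simp [hT'def]
      have rhs1 : ((eta y)⁻¹ • (ContinuousLinearMap.id ℝ (Rd d)
          + ((-(eta y)⁻¹ • Dη y)).smulRight (y - x))) v
          = (eta y)⁻¹ • v + ((eta y)⁻¹ * (-(eta y)⁻¹ * ((Dη y) v))) • (y - x) := by
        simp [ContinuousLinearMap.smulRight_apply, smul_add, smul_smul]
      rw [lhs1, rhs1]
      congr 2
      ring
    have haux := det_id_add_smulRight ((-(eta y)⁻¹) • Dη y) (y - x)
    calc (T' y).det
        = ((eta y)⁻¹ • (ContinuousLinearMap.id ℝ (Rd d)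
            + ((-(eta y)⁻¹ • Dη y)).smulRight (y - x))).det := by rw [hrw]
      _ = ((eta y)⁻¹)^(Module.finrank ℝ (Rd d))
            * (ContinuousLinearMap.id ℝ (Rd d)
              + ((-(eta y)⁻¹ • Dη y)).smulRight (y - x)).det := by
          show LinearMap.det _ = _
          rw [ContinuousLinearMap.coe_smul, LinearMap.det_smul]
      _ = ((eta y)⁻¹)^d * (1 + ((-(eta y)⁻¹) • Dη y) (y - x)) := by
          rw [haux, finrank_euclideanSpace_fin]
      _ = ((eta y)⁻¹)^d * (1 - cf y) := by
          congr 1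
          simp only [hcfdef, ContinuousLinearMap.smul_apply, smul_eq_mul]
          ring
  -- the integrand functions
  set g : Rd d → ℝ := fun z => ψ ‖z‖ * ‖z‖ ^ (-α) with hgdef
  set g0 : Rd d → ℝ := fun y => psiDA δ α q lam ψ y x with hg0def
  have hg0eq : ∀ y ∈ Ω, g0 y
      = (eta y) ^ (-(d:ℝ)) * ψ (‖y - x‖ / eta y) * (‖y - x‖ / eta y) ^ (-α) := by
    intro y hy
    have he : etaD δ q lam y = eta y := (hetaeqD y hy).symm
    simp only [hg0def, psiDA]
    rw [he, norm_sub_rev x y]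
  have hg0nonneg : ∀ y ∈ Ω, 0 ≤ g0 y := by
    intro y hy
    rw [hg0eq y hy]
    have hety := hetaposΩ y hy
    have ht0 : (0:ℝ) ≤ ‖y - x‖ / eta y := div_nonneg (norm_nonneg _) hety.le
    exact mul_nonneg (mul_nonneg (Real.rpow_nonneg hety.le _) (hψ_nonneg _))
      (Real.rpow_nonneg ht0 _)
  have hFg0 : ∀ y ∈ s, |(T' y).det| • g (T y) = (1 - cf y) * g0 y := by
    intro y hy
    have hyΩ : y ∈ Ω := hy.1.1
    have hety := hetaposΩ y hyΩ
    have hcf := hcfK y hy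
    have h1c : 0 < 1 - cf y := by
      have habs := abs_le.mp hcf
      linarith
    have habsd : |(T' y).det| = ((eta y)⁻¹)^d * (1 - cf y) := by
      rw [hdet y hy, abs_mul, abs_of_pos h1c,
        abs_of_nonneg (pow_nonneg (inv_nonneg.mpr hety.le) d)]
    have hTy : ‖T y‖ = ‖y - x‖ / eta y := hTnorm y hety
    have hgTy : g (T y) = ψ (‖y - x‖ / eta y) * (‖y - x‖ / eta y) ^ (-α) := by
      simp only [hgdef]
      rw [hTy]
    have hpow : (eta y) ^ (-(d:ℝ)) = ((eta y)⁻¹)^d := by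
      rw [Real.rpow_neg hety.le, Real.rpow_natCast, inv_pow]
    have hg0y : g0 y = ((eta y)⁻¹)^d * (ψ (‖y - x‖ / eta y) * (‖y - x‖ / eta y) ^ (-α)) := by
      rw [hg0eq y hyΩ, hpow]
      ring
    rw [habsd, smul_eq_mul, hgTy, hg0y]
    ring
  -- indicator identities
  have hg0zero : ∀ y ∈ Ω, y ∉ V → y ≠ x → g0 y = 0 := by
    intro y hyΩ hyV hyx
    have hety := hetaposΩ y hyΩ
    have h2 : 0 < ‖y - x‖ := norm_pos_iff.mpr (sub_ne_zero.mpr hyx)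
    have h3 : eta y < ‖y - x‖ := by
      by_contra hc
      push_neg at hc
      exact hyV ⟨hyΩ, h2, hc⟩
    have ht : 1 < ‖y - x‖ / eta y := (one_lt_div hety).mpr h3
    have hψ0 : ψ (‖y - x‖ / eta y) = 0 := by
      by_contra hne
      have hmem := hψ_supp (Function.mem_support.mpr hne)
      have := hmem.2
      linarith
    rw [hg0eq y hyΩ, hψ0, mul_zero, zero_mul]
  have hind : Ω.indicator g0 =ᵐ[volume] s.indicator g0 := by
    have h1 : ∀ᵐ y : Rd d, y ∉ ({x} : Set (Rd d)) := by
      rw [ae_iff]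
      simpa using hxnull
    have h2 : ∀ᵐ y : Rd d, y ∉ V \ D := by
      rw [ae_iff]
      simp only [not_not, Set.setOf_mem_eq]
      exact hVDnull
    filter_upwards [h1, h2] with y hy1 hy2
    by_cases hyΩ : y ∈ Ω
    · by_cases hys : y ∈ s
      · rw [Set.indicator_of_mem hyΩ, Set.indicator_of_mem hys]
      · rw [Set.indicator_of_mem hyΩ, Set.indicator_of_notMem hys]
        have hyV : y ∉ V := by
          intro hyV
          have hyD : y ∈ D := by
            by_contra hyD
            exact hy2 ⟨hyV, hyD⟩
          exact hys ⟨hyV, hyD⟩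
        have hyx : y ≠ x := fun h => hy1 (by simp [h])
        exact hg0zero y hyΩ hyV hyx
    · rw [Set.indicator_of_notMem hyΩ, Set.indicator_of_notMem (fun hys => hyΩ hys.1.1)]
  have hint_eq : ∫ y in Ω, g0 y = ∫ y in s, g0 y := by
    rw [← MeasureTheory.integral_indicator hΩo.measurableSet,
      ← MeasureTheory.integral_indicator hsmeas]
    exact integral_congr_ae hind
  have hint_iff : IntegrableOn g0 Ω ↔ IntegrableOn g0 s := by
    rw [← MeasureTheory.integrable_indicator_iff hΩo.measurableSet,
      ← MeasureTheory.integrable_indicator_iff hsmeas]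
    exact integrable_congr hind
  -- the set identification up to null sets
  have hTs_sub : T '' s ⊆ Metric.closedBall 0 1 \ {0} :=
    subset_trans (Set.image_mono Set.inter_subset_left) hTVsub
  have hTs_sup : (Metric.closedBall (0:Rd d) 1 \ {0}) \ (T '' s) ⊆ T '' (V \ D) := by
    rintro z ⟨hz1, hz2⟩
    obtain ⟨y, hyV, rfl⟩ := hTVsup hz1
    refine ⟨y, ⟨hyV, fun hyD => hz2 ⟨y, ⟨hyV, hyD⟩, rfl⟩⟩, rfl⟩
  have hset_ae : (T '' s : Set (Rd d)) =ᵐ[volume] Metric.ball (0:Rd d) 1 := by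
    rw [MeasureTheory.ae_eq_set]
    constructor
    · apply measure_mono_null _ (Measure.addHaar_sphere volume (0:Rd d) 1)
      intro z hz
      have h1 := hTs_sub hz.1
      have h2 : z ∉ Metric.ball (0:Rd d) 1 := hz.2
      have h3 : dist z 0 ≤ 1 := mem_closedBall.mp h1.1
      have h4 : ¬ dist z 0 < 1 := fun hc => h2 (mem_ball.mpr hc)
      rw [Metric.mem_sphere]
      linarith
    · have hnull2 : volume (({(0:Rd d)} : Set (Rd d)) ∪ T '' (V \ D)) = 0 :=
        measure_union_null h0null hTVDnull
      apply measure_mono_null _ hnull2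
      intro z hz
      by_cases hz0 : z = 0
      · left; simp [hz0]
      · right
        apply hTs_sup
        exact ⟨⟨Metric.ball_subset_closedBall hz.1, by simp [hz0]⟩, hz.2⟩
  -- change of variables
  have hT'w : ∀ y ∈ s, HasFDerivWithinAt T (T' y) s y := fun y hy => (hT'at y hy).hasFDerivWithinAt
  have hinj_s : Set.InjOn T s := hTinj.mono Set.inter_subset_left
  have hCoV := MeasureTheory.integral_image_eq_integral_abs_det_fderiv_smul volume hsmeas hT'w hinj_s g
  have hCoVi := MeasureTheory.integrableOn_image_iff_integrableOn_abs_det_fderiv_smul volume hsmeas hT'w hinj_s g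
  have hIeq : ∫ z in Metric.ball (0:Rd d) 1, g z = ∫ y in s, |(T' y).det| • g (T y) := by
    rw [← hCoV]
    exact (setIntegral_congr_set hset_ae).symm
  have hIntBallIffF : IntegrableOn g (Metric.ball (0:Rd d) 1)
      ↔ IntegrableOn (fun y => |(T' y).det| • g (T y)) s := by
    rw [← hCoVi]
    unfold IntegrableOn
    rw [Measure.restrict_congr_set hset_ae]
  -- truncated coefficient
  set cft : Rd d → ℝ := fun y => max (-K) (min K (cf y)) with hcftdef
  have hcft_eq : ∀ y ∈ s, cft y = cf y := by
    intro y hy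
    have habs := abs_le.mp (hcfK y hy)
    simp only [hcftdef]
    rw [min_eq_right habs.2, max_eq_right habs.1]
  have hcft_bdd : ∀ y, -K ≤ cft y ∧ cft y ≤ K := by
    intro y
    constructor
    · exact le_max_left _ _
    · exact max_le (by linarith) (min_le_left _ _)
  have hDηmeas : Measurable Dη := measurable_fderiv ℝ eta
  have happly : Measurable fun y => (Dη y) (y - x) := by
    have hcont : Continuous fun p : (Rd d →L[ℝ] ℝ) × Rd d => p.1 p.2 :=
      isBoundedBilinearMap_apply.continuous
    exact hcont.measurable.comp (hDηmeas.prodMk ((continuous_id.sub continuous_const).measurable))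
  have hcfmeas : Measurable cf := (hetacont.measurable.inv).mul happly
  have hcftmeas : Measurable cft := measurable_const.max (measurable_const.min hcfmeas)
  have hs_ae_eqF : (fun y => |(T' y).det| • g (T y))
      =ᵐ[volume.restrict s] (fun y => (1 - cft y) * g0 y) := by
    refine (ae_restrict_iff' hsmeas).mpr (ae_of_all _ fun y hy => ?_)
    show |(T' y).det| • g (T y) = (1 - cft y) * g0 y
    rw [hFg0 y hy, hcft_eq y hy]
  have hIntF_iff : IntegrableOn (fun y => |(T' y).det| • g (T y)) s ↔ IntegrableOn g0 s := by
    constructor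
    · intro h
      have h2 : IntegrableOn (fun y => (1 - cft y) * g0 y) s := h.congr hs_ae_eqF
      have h3 : IntegrableOn (fun y => (1 - cft y)⁻¹ * ((1 - cft y) * g0 y)) s := by
        apply h2.bdd_mul (c := (1-K)⁻¹) ((measurable_const.sub hcftmeas).inv.aestronglyMeasurable)
        refine ae_of_all _ fun y => ?_
        have hb := hcft_bdd y
        have h1c : 1 - K ≤ 1 - cft y := by linarith [hb.2]
        have h1c0 : 0 < 1 - cft y := by linarith [hb.2]
        show ‖(1 - cft y)⁻¹‖ ≤ (1-K)⁻¹
        rw [Real.norm_eq_abs, abs_inv, abs_of_pos h1c0]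
        exact inv_anti₀ h1K h1c
      apply h3.congr
      refine ae_of_all _ fun y => ?_
      have hb := hcft_bdd y
      have h1c0 : (1:ℝ) - cft y ≠ 0 := by
        have hb2 := hb.2
        intro hc
        linarith only [hb2, hc, hK3]
      field_simp
    · intro h
      have h2 : IntegrableOn (fun y => (1 - cft y) * g0 y) s := by
        apply h.bdd_mul (c := 1 + K) ((measurable_const.sub hcftmeas).aestronglyMeasurable)
        refine ae_of_all _ fun y => ?_
        have hb := hcft_bdd y
        show ‖1 - cft y‖ ≤ 1 + K
        rw [Real.norm_eq_abs, abs_le]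
        constructor <;> linarith [hb.1, hb.2]
      exact h2.congr hs_ae_eqF.symm
  -- final assembly
  by_cases hInt : IntegrableOn g0 Ω
  · have hIntg0s : IntegrableOn g0 s := hint_iff.mp hInt
    have hIntF : IntegrableOn (fun y => |(T' y).det| • g (T y)) s := hIntF_iff.mpr hIntg0s
    have hps : ∀ y ∈ s, 0 ≤ g0 y := fun y hy => hg0nonneg y hy.1.1
    have hle : ∫ y in s, |(T' y).det| • g (T y) ≤ ∫ y in s, (1 + K) * g0 y := by
      apply setIntegral_mono_on hIntF (hIntg0s.const_mul (1+K)) hsmeas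
      intro y hy
      rw [hFg0 y hy]
      have habs := abs_le.mp (hcfK y hy)
      have h' : 1 - cf y ≤ 1 + K := by linarith only [habs.1]
      exact mul_le_mul_of_nonneg_right h' (hps y hy)
    have hge : ∫ y in s, (1 - K) * g0 y ≤ ∫ y in s, |(T' y).det| • g (T y) := by
      apply setIntegral_mono_on (hIntg0s.const_mul (1-K)) hIntF hsmeas
      intro y hy
      rw [hFg0 y hy]
      have habs := abs_le.mp (hcfK y hy)
      have h' : 1 - K ≤ 1 - cf y := by linarith only [habs.2]
      exact mul_le_mul_of_nonneg_right h' (hps y hy)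
    have hIψ : ∫ z in Metric.ball (0:Rd d) 1, g z ≤ (1 + K) * ∫ y in s, g0 y := by
      rw [hIeq, ← MeasureTheory.integral_const_mul]
      exact hle
    have hIψ2 : (1 - K) * ∫ y in s, g0 y ≤ ∫ z in Metric.ball (0:Rd d) 1, g z := by
      rw [hIeq, ← MeasureTheory.integral_const_mul]
      exact hge
    rw [hint_eq]
    constructor
    · rw [inv_mul_le_iff₀ h1K']
      exact hIψ
    · rw [inv_mul_eq_div, le_div_iff₀ h1K, mul_comm]
      exact hIψ2
  · have h1 : ∫ y in Ω, g0 y = 0 := integral_undef hInt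
    have h2 : ∫ z in Metric.ball (0:Rd d) 1, g z = 0 :=
      integral_undef (fun hc => hInt (hint_iff.mpr (hIntF_iff.mp (hIntBallIffF.mp hc))))
    rw [h1, h2]
    norm_num
end
end

section
/- Weighted integral estimate for the x-gradient of the adjoint kernel: Assume ψ satisfies (A_ψ) and is C¹. For x, y ∈ Ω write ψ_δ(y,x) := η_δ(y)^{−d}·ψ(|x−y|/η_δ(y)). Then for every α ∈ ℝ there exists a constant C = C(d, ψ, κ₁, α) > 0 such that for all x ∈ Ω, ∫_Ω η_δ(y)^α·|∇_x ψ_δ(y,x)| dy ≤ C·η_δ(x)^{α−1}, where ∇_x denotes the gradient with respect to the variable x. -/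
open MeasureTheory Real Set Filter Metric
open scoped ENNReal NNReal Topology RealInnerProductSpace

noncomputable section

/-- Boundary-localized mollifier kernel `ψ_δ(y,x)` (localization in the first argument). -/
def psiAdj {d : ℕ} (δ : ℝ) (q : ℝ → ℝ) (lam : Rd d → ℝ) (ψ : ℝ → ℝ) (y x : Rd d) : ℝ :=
  (etaD δ q lam y) ^ (-(d : ℝ)) * ψ (‖x - y‖ / etaD δ q lam y)

lemma norm_gradient_eq' {F : Type*} [NormedAddCommGroup F] [InnerProductSpace ℝ F]
    [CompleteSpace F] (f : F → ℝ) (x : F) : ‖gradient f x‖ = ‖fderiv ℝ f x‖ :=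
  (InnerProductSpace.toDual ℝ F).symm.norm_map _

/-- weighted integral estimate for the `x`-gradient of the adjoint kernel. -/
theorem statement_3 {d : ℕ} (hd : 1 ≤ d)
    (Ω : Set (Rd d)) (hΩo : IsOpen Ω) (hΩne : Ω.Nonempty)
    (hΩb : Bornology.IsBounded Ω) (hΩc : IsConnected Ω)
    -- (A_λ)
    (lam : Rd d → ℝ) (κ0 κ1 : ℝ) (hκ0 : 1 ≤ κ0) (hκ1 : 0 < κ1)
    (hlam_nonneg : ∀ x ∈ closure Ω, 0 ≤ lam x)
    (hlam_lb : ∀ x ∈ closure Ω, κ0⁻¹ * Metric.infDist x (frontier Ω) ≤ lam x)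
    (hlam_ub : ∀ x ∈ closure Ω, lam x ≤ κ0 * Metric.infDist x (frontier Ω))
    (hlam_lip : ∀ x ∈ Ω, ∀ y ∈ Ω, |lam x - lam y| ≤ κ1 * ‖x - y‖)
    -- (A_q)
    (q : ℝ → ℝ) (Cq cq : ℝ) (hq_C1 : ContDiff ℝ 1 q) (hq0 : q 0 = 0)
    (hq_pos : ∀ r : ℝ, 0 < r → 0 < q r ∧ q r ≤ r)
    (hq_deriv : ∀ r : ℝ, 0 ≤ r → 0 ≤ deriv q r ∧ deriv q r ≤ 1)
    (hcq : 0 < cq) (hq_deriv_pos : ∀ r ∈ Set.Ioc (0:ℝ) cq, 0 < deriv q r)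
    (hCq : 1 ≤ Cq) (hq_dbl : ∀ r : ℝ, 0 < r → q (2 * r) ≤ Cq * q r)
    -- (A_ψ) with ψ of class C¹
    (ψ : ℝ → ℝ) (cψ : ℝ) (hcψ : 0 < cψ)
    (hψ_nonneg : ∀ t, 0 ≤ ψ t) (hψ_even : ∀ t, ψ (-t) = ψ t)
    (hψ_C1 : ContDiff ℝ 1 ψ)
    (hψ_supp1 : Set.Icc (-cψ) cψ ⊆ tsupport ψ)
    (hψ_supp2 : tsupport ψ ⊆ Set.Ioo (-1) 1)
    (hψ_norm : ∫ x : Rd d, ψ ‖x‖ = 1)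
    -- exponent
    (α : ℝ) :
    -- conclusion: C = C(d, ψ, κ₁, α), uniform in δ and x
    ∃ C > 0, ∀ δ : ℝ, 0 < δ →
      δ < 1 / (3 * max 1 (max κ1 (Cq * κ0 ^ Real.logb 2 Cq))) →
      ∀ x ∈ Ω,
        (∫ y in Ω, (etaD δ q lam y) ^ α *
            ‖gradient (fun x' : Rd d => psiAdj δ q lam ψ y x') x‖)
          ≤ C * (etaD δ q lam x) ^ (α - 1) := by
  classical
  haveI : Nonempty (Fin d) := ⟨⟨0, hd⟩⟩
  haveI : Nontrivial (Rd d) := inferInstance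
  -- a bound on the derivative of ψ
  have hψsupp : HasCompactSupport ψ :=
    IsCompact.of_isClosed_subset isCompact_Icc (isClosed_tsupport ψ)
      (hψ_supp2.trans Set.Ioo_subset_Icc_self)
  have hψ'cont : Continuous (deriv ψ) := hψ_C1.continuous_deriv le_rfl
  obtain ⟨M0, hM0⟩ := (hψsupp.deriv).exists_bound_of_continuous hψ'cont
  set M : ℝ := max M0 1 with hMdef
  have hMpos : 0 < M := lt_of_lt_of_le one_pos (le_max_right _ _)
  have hM : ∀ t, ‖deriv ψ t‖ ≤ M := fun t => (hM0 t).trans (le_max_left _ _)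
  have hψlip : LipschitzWith M.toNNReal ψ := by
    refine lipschitzWith_of_nnnorm_deriv_le (hψ_C1.differentiable one_ne_zero) (fun t => ?_)
    rw [← NNReal.coe_le_coe, coe_nnnorm, Real.coe_toNNReal _ hMpos.le]
    exact hM t
  -- volume of the unit ball
  set vol1 : ℝ := (volume (Metric.ball (0 : Rd d) 1)).toReal with hvol1
  have hvol1pos : 0 < vol1 := ENNReal.toReal_pos
    (measure_ball_pos volume 0 one_pos).ne' measure_ball_lt_top.ne
  set β : ℝ := α - d - 1 with hβ
  refine ⟨M * 2 ^ |β| * 2 ^ d * vol1, by positivity, ?_⟩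
  intro δ hδ0 hδub x hx
  set maxv : ℝ := max 1 (max κ1 (Cq * κ0 ^ Real.logb 2 Cq)) with hmaxv
  have hmaxvpos : 0 < maxv := lt_of_lt_of_le one_pos (le_max_left _ _)
  have hδκ1 : δ * κ1 ≤ 1 / 3 := by
    have h1 : δ * (3 * maxv) < 1 := (lt_div_iff₀ (by positivity)).mp hδub
    have h2 : κ1 ≤ maxv := le_trans (le_max_left _ _) (le_max_right _ _)
    nlinarith
  -- the frontier is nonempty
  have hfr : (frontier Ω).Nonempty := by
    by_contra h
    rw [Set.not_nonempty_iff_eq_empty] at h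
    have hclopen : IsClopen Ω := isClopen_iff_frontier_eq_empty.mpr h
    have huniv : Ω = Set.univ := hclopen.eq_univ hΩne
    obtain ⟨R, hR⟩ := hΩb.subset_closedBall 0
    obtain ⟨z, hz⟩ := NormedSpace.exists_lt_norm ℝ (Rd d) R
    have : z ∈ Metric.closedBall (0 : Rd d) R := hR (huniv ▸ Set.mem_univ z)
    rw [Metric.mem_closedBall, dist_zero_right] at this
    linarith
  -- positivity of η on Ω
  have heta_pos : ∀ z ∈ Ω, 0 < etaD δ q lam z := by
    intro z hz
    have hzc : z ∈ closure Ω := subset_closure hz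
    have hnf : z ∉ frontier Ω := by
      rw [hΩo.frontier_eq]; exact fun hzf => hzf.2 hz
    have hpos : 0 < Metric.infDist z (frontier Ω) :=
      (isClosed_frontier.notMem_iff_infDist_pos hfr).mp hnf
    have hlam : 0 < lam z :=
      lt_of_lt_of_le (by positivity) (hlam_lb z hzc)
    exact mul_pos hδ0 (hq_pos _ hlam).1
  -- η is (1/3)-Lipschitz on Ω
  have hq_lip : ∀ a b : ℝ, 0 ≤ a → 0 ≤ b → |q a - q b| ≤ |a - b| := by
    intro a b ha hb
    have := Convex.norm_image_sub_le_of_norm_deriv_le (f := q) (s := Set.Ici (0:ℝ))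
      (fun r _ => (hq_C1.differentiable one_ne_zero).differentiableAt)
      (fun r hr => by
        rw [Real.norm_eq_abs, abs_le]
        exact ⟨by linarith [(hq_deriv r hr).1], (hq_deriv r hr).2⟩)
      (convex_Ici 0) hb ha
    simpa [Real.norm_eq_abs] using this
  have heta_lip : ∀ z ∈ Ω, ∀ w ∈ Ω,
      |etaD δ q lam z - etaD δ q lam w| ≤ (1/3) * ‖z - w‖ := by
    intro z hz w hw
    have hz' : z ∈ closure Ω := subset_closure hz
    have hw' : w ∈ closure Ω := subset_closure hw
    have h1 : |etaD δ q lam z - etaD δ q lam w| = δ * |q (lam z) - q (lam w)| := by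
      rw [etaD, etaD, ← mul_sub, abs_mul, abs_of_pos hδ0]
    rw [h1]
    have h2 : |q (lam z) - q (lam w)| ≤ κ1 * ‖z - w‖ :=
      le_trans (hq_lip _ _ (hlam_nonneg z hz') (hlam_nonneg w hw')) (hlam_lip z hz w hw)
    calc δ * |q (lam z) - q (lam w)| ≤ δ * (κ1 * ‖z - w‖) := by
          exact mul_le_mul_of_nonneg_left h2 hδ0.le
      _ = (δ * κ1) * ‖z - w‖ := by ring
      _ ≤ (1/3) * ‖z - w‖ := mul_le_mul_of_nonneg_right hδκ1 (norm_nonneg _)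
  set ηx : ℝ := etaD δ q lam x with hηxdef
  have hηx : 0 < ηx := heta_pos x hx
  set c0 : ℝ := M * 2 ^ |β| * ηx ^ β with hc0
  have hc0nonneg : 0 ≤ c0 := by positivity
  set g : Rd d → ℝ := (Metric.ball x (2 * ηx)).indicator (fun _ => c0) with hg
  have hgnonneg : ∀ z, 0 ≤ g z := fun z => Set.indicator_nonneg (fun _ _ => hc0nonneg) z
  have hgint : Integrable g := by
    refine (integrableOn_const measure_ball_lt_top.ne).integrable_indicator
      measurableSet_ball
  -- the pointwise bound
  have hptwise : ∀ y ∈ Ω,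
      (etaD δ q lam y) ^ α * ‖gradient (fun x' : Rd d => psiAdj δ q lam ψ y x') x‖ ≤ g y := by
    intro y hy
    set ηy : ℝ := etaD δ q lam y with hηydef
    have hηy : 0 < ηy := heta_pos y hy
    by_cases hcase : ‖x - y‖ < ηy
    · -- near case
      have h1 : |ηx - ηy| ≤ (1/3) * ‖x - y‖ := heta_lip x hx y hy
      have habs : |ηx - ηy| < ηy / 3 := lt_of_le_of_lt h1 (by linarith)
      have hl := (abs_lt.mp habs).1
      have hr := (abs_lt.mp habs).2
      have h2 : ηy < (3/2) * ηx := by linarith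
      have h3 : (3/4) * ηx < ηy := by linarith
      have hball : y ∈ Metric.ball x (2 * ηx) := by
        rw [Metric.mem_ball, dist_eq_norm]
        have hnorm : ‖y - x‖ = ‖x - y‖ := norm_sub_rev y x
        linarith
      -- gradient bound via Lipschitz constant
      have ha : (0:ℝ) ≤ ηy ^ (-(d:ℝ)) := Real.rpow_nonneg hηy.le _
      set K : ℝ := ηy ^ (-(d:ℝ)) * (M / ηy) with hK
      have hKnonneg : 0 ≤ K := by positivity
      have hlipF : LipschitzWith K.toNNReal (fun x' : Rd d => psiAdj δ q lam ψ y x') := by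
        refine LipschitzWith.of_dist_le_mul (fun u v => ?_)
        rw [Real.coe_toNNReal _ hKnonneg, Real.dist_eq, dist_eq_norm]
        have hsub : psiAdj δ q lam ψ y u - psiAdj δ q lam ψ y v
            = ηy ^ (-(d:ℝ)) * (ψ (‖u - y‖ / ηy) - ψ (‖v - y‖ / ηy)) := by
          rw [psiAdj, psiAdj, ← hηydef, mul_sub]
        have hψd : |ψ (‖u - y‖ / ηy) - ψ (‖v - y‖ / ηy)|
            ≤ M * |‖u - y‖ / ηy - ‖v - y‖ / ηy| := by
          have := hψlip.dist_le_mul (‖u - y‖ / ηy) (‖v - y‖ / ηy)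
          rwa [Real.dist_eq, Real.dist_eq, Real.coe_toNNReal _ hMpos.le] at this
        have hsd : |‖u - y‖ / ηy - ‖v - y‖ / ηy| ≤ ‖u - v‖ / ηy := by
          rw [div_sub_div_same, abs_div, abs_of_pos hηy]
          have h' : |‖u - y‖ - ‖v - y‖| ≤ ‖(u - y) - (v - y)‖ := abs_norm_sub_norm_le _ _
          rw [sub_sub_sub_cancel_right] at h'
          gcongr
        calc |psiAdj δ q lam ψ y u - psiAdj δ q lam ψ y v|
            = ηy ^ (-(d:ℝ)) * |ψ (‖u - y‖ / ηy) - ψ (‖v - y‖ / ηy)| := by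
              rw [hsub, abs_mul, abs_of_nonneg ha]
          _ ≤ ηy ^ (-(d:ℝ)) * (M * (‖u - v‖ / ηy)) := by
              refine mul_le_mul_of_nonneg_left (hψd.trans ?_) ha
              exact mul_le_mul_of_nonneg_left hsd hMpos.le
          _ = K * ‖u - v‖ := by rw [hK]; field_simp
      have hgrad : ‖gradient (fun x' : Rd d => psiAdj δ q lam ψ y x') x‖ ≤ K := by
        rw [norm_gradient_eq']
        have := norm_fderiv_le_of_lipschitz ℝ hlipF (x₀ := x)
        rwa [Real.coe_toNNReal _ hKnonneg] at this
      -- algebra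
      have halg : ηy ^ α * K = M * ηy ^ β := by
        rw [hK, div_eq_mul_inv, ← Real.rpow_neg_one ηy]
        rw [show ηy ^ α * (ηy ^ (-(d:ℝ)) * (M * ηy ^ (-1:ℝ)))
            = M * (ηy ^ α * ηy ^ (-(d:ℝ)) * ηy ^ (-1:ℝ)) from by ring]
        rw [← Real.rpow_add hηy, ← Real.rpow_add hηy,
          show α + -(d:ℝ) + -1 = β from by rw [hβ]; ring]
      have hcomp : ηy ^ β ≤ 2 ^ |β| * ηx ^ β := by
        set t : ℝ := ηy / ηx with htdef
        have ht0 : 0 < t := div_pos hηy hηx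
        have hη_eq : ηy = t * ηx := (div_mul_cancel₀ ηy hηx.ne').symm
        have ht1 : (1:ℝ)/2 ≤ t := by
          rw [htdef, le_div_iff₀ hηx]; linarith
        have ht2 : t ≤ 2 := by
          rw [htdef, div_le_iff₀ hηx]; linarith
        have htb : t ^ β ≤ 2 ^ |β| := by
          rcases le_or_gt 0 β with hb | hb
          · rw [abs_of_nonneg hb]; exact Real.rpow_le_rpow ht0.le ht2 hb
          · rw [abs_of_neg hb]
            calc t ^ β ≤ ((1:ℝ)/2) ^ β :=
                Real.rpow_le_rpow_of_nonpos (by norm_num) ht1 hb.le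
              _ = 2 ^ (-β) := by
                rw [one_div, Real.inv_rpow (by norm_num : (0:ℝ) ≤ 2),
                  ← Real.rpow_neg (by norm_num : (0:ℝ) ≤ 2)]
        have hsplit : ηy ^ β = t ^ β * ηx ^ β := by
          rw [hη_eq]; exact Real.mul_rpow ht0.le hηx.le
        rw [hsplit]
        exact mul_le_mul_of_nonneg_right htb (Real.rpow_nonneg hηx.le _)
      have : ηy ^ α * ‖gradient (fun x' : Rd d => psiAdj δ q lam ψ y x') x‖ ≤ c0 := by
        calc ηy ^ α * ‖gradient (fun x' : Rd d => psiAdj δ q lam ψ y x') x‖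
            ≤ ηy ^ α * K := mul_le_mul_of_nonneg_left hgrad (Real.rpow_nonneg hηy.le _)
          _ = M * ηy ^ β := halg
          _ ≤ M * (2 ^ |β| * ηx ^ β) := mul_le_mul_of_nonneg_left hcomp hMpos.le
          _ = c0 := by rw [hc0]; ring
      rw [hg, Set.indicator_of_mem hball]
      exact this
    · -- far case: the kernel vanishes near x
      push_neg at hcase
      have hzero : (fun x' : Rd d => psiAdj δ q lam ψ y x') =ᶠ[𝓝 x] (fun _ => (0:ℝ)) := by
        have hcont : Continuous (fun x' : Rd d => ‖x' - y‖ / ηy) :=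
          (continuous_id.sub continuous_const).norm.div_const _
        have hopen : IsOpen ((fun x' : Rd d => ‖x' - y‖ / ηy) ⁻¹' (tsupport ψ)ᶜ) :=
          (isClosed_tsupport ψ).isOpen_compl.preimage hcont
        have hmem : x ∈ (fun x' : Rd d => ‖x' - y‖ / ηy) ⁻¹' (tsupport ψ)ᶜ := by
          intro hmem'
          have := hψ_supp2 hmem'
          have hge : (1:ℝ) ≤ ‖x - y‖ / ηy := (one_le_div hηy).mpr hcase
          exact absurd this.2 (by simpa using not_lt.mpr hge)
        filter_upwards [hopen.mem_nhds hmem] with z hz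
        have : ψ (‖z - y‖ / ηy) = 0 := image_eq_zero_of_notMem_tsupport hz
        rw [psiAdj, ← hηydef, this, mul_zero]
      have hgz : gradient (fun x' : Rd d => psiAdj δ q lam ψ y x') x = 0 := by
        rw [hzero.gradient_eq, gradient_fun_const]
      rw [hgz, norm_zero, mul_zero]
      exact hgnonneg y
  -- put everything together
  have hmono : (∫ y in Ω, (etaD δ q lam y) ^ α *
      ‖gradient (fun x' : Rd d => psiAdj δ q lam ψ y x') x‖) ≤ ∫ y in Ω, g y := by
    refine integral_mono_of_nonneg ?_ hgint.restrict ?_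
    · exact ae_restrict_of_forall_mem hΩo.measurableSet (fun y hy =>
        mul_nonneg (Real.rpow_nonneg (heta_pos y hy).le _) (norm_nonneg _))
    · exact ae_restrict_of_forall_mem hΩo.measurableSet hptwise
  have hle2 : (∫ y in Ω, g y) ≤ ∫ y, g y :=
    setIntegral_le_integral hgint (ae_of_all _ hgnonneg)
  have hgval : (∫ y, g y) = (2 * ηx) ^ d * vol1 * c0 := by
    rw [hg, integral_indicator_const _ measurableSet_ball, smul_eq_mul]
    congr 1
    rw [measureReal_def, Measure.addHaar_ball volume x (by positivity : (0:ℝ) ≤ 2 * ηx)]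
    rw [ENNReal.toReal_mul, ENNReal.toReal_ofReal (by positivity)]
    rw [finrank_euclideanSpace_fin]
  have hfinal : (2 * ηx) ^ d * vol1 * c0 = (M * 2 ^ |β| * 2 ^ d * vol1) * ηx ^ (α - 1) := by
    have hη : (ηx : ℝ) ^ (d:ℕ) * ηx ^ β = ηx ^ (α - 1) := by
      rw [← Real.rpow_natCast ηx d, ← Real.rpow_add hηx]
      congr 1
      rw [hβ]; ring
    rw [mul_pow, hc0]
    calc (2:ℝ) ^ d * ηx ^ d * vol1 * (M * 2 ^ |β| * ηx ^ β)
        = (M * 2 ^ |β| * 2 ^ d * vol1) * (ηx ^ (d:ℕ) * ηx ^ β) := by ring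
      _ = (M * 2 ^ |β| * 2 ^ d * vol1) * ηx ^ (α - 1) := by rw [hη]
  calc (∫ y in Ω, (etaD δ q lam y) ^ α *
      ‖gradient (fun x' : Rd d => psiAdj δ q lam ψ y x') x‖) ≤ ∫ y in Ω, g y := hmono
    _ ≤ ∫ y, g y := hle2
    _ = (2 * ηx) ^ d * vol1 * c0 := hgval
    _ = (M * 2 ^ |β| * 2 ^ d * vol1) * ηx ^ (α - 1) := hfinal
end
end

section
/- Finiteness of the reversed-kernel boundary integral: In the special Lipschitz epigraph setting, for any u, v ∈ C²_b(ℝ^d) and any 0 < ε ≪ min{δ, ϱ}, ∫_{U_ε} ∫_{U^ε} ρ^ε_{δ,β−p}(y,x)·Φ_p′(∇u(x)·(x−y)/|x−y|)·(v(x)/|x−y|) dy dx ≤ C·‖∇u‖_{L^∞}^{p−1}·‖v‖_{L^∞}/ε², where C does not depend on ε. -/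
open MeasureTheory Real Set Filter Metric
open scoped ENNReal NNReal Topology RealInnerProductSpace

noncomputable section

/-- The point `(x', t) ∈ ℝ^{m}×ℝ = ℝ^{m+1}`. -/
def pt {m : ℕ} (x' : Rd m) (t : ℝ) : Rd (m+1) :=
  (EuclideanSpace.equiv (Fin (m+1)) ℝ).symm
    (Fin.snoc ((EuclideanSpace.equiv (Fin m) ℝ) x') t)

/-- The horizontal part `x'` of `x = (x', x_d) ∈ ℝ^{m+1}`. -/
def fst' {m : ℕ} (z : Rd (m+1)) : Rd m :=
  (EuclideanSpace.equiv (Fin m) ℝ).symm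
    (Fin.init ((EuclideanSpace.equiv (Fin (m+1)) ℝ) z))

/-- The vertical part `x_d` of `x = (x', x_d) ∈ ℝ^{m+1}`. -/
def lastc {m : ℕ} (z : Rd (m+1)) : ℝ := z (Fin.last m)

/-- The kernel `ρ_{δ,β−p}(x,y)`. -/
def rhoKer {d : ℕ} (δ β p : ℝ) (ρ q : ℝ → ℝ) (lam : Rd d → ℝ) (x y : Rd d) : ℝ :=
  (etaD δ q lam x) ^ (-(d : ℝ)) * ρ (‖y - x‖ / etaD δ q lam x) *
    (‖y - x‖ / etaD δ q lam x) ^ (p - β)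

open Classical in
/-- The truncated kernel `ρ^ε_{δ,β−p}(x,y)`. -/
def rhoKerEps {d : ℕ} (ε δ β p : ℝ) (ρ q : ℝ → ℝ) (lam : Rd d → ℝ) (x y : Rd d) : ℝ :=
  if ε ≤ ‖y - x‖ / etaD δ q lam x ∧ ‖y - x‖ / etaD δ q lam x < 1 then
    rhoKer δ β p ρ q lam x y else 0

lemma etaD_def {d : ℕ} (δ : ℝ) (q : ℝ → ℝ) (lam : Rd d → ℝ) (x : Rd d) :
    etaD δ q lam x = δ * q (lam x) := rfl

lemma fst'_apply {m : ℕ} (z : Rd (m+1)) (i : Fin m) : fst' z i = z i.castSucc := rfl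

lemma lastc_def {m : ℕ} (z : Rd (m+1)) : lastc z = z (Fin.last m) := rfl

lemma pt_apply {m : ℕ} (a : Rd m) (t : ℝ) (j : Fin (m+1)) :
    pt a t j = Fin.snoc (α := fun _ => ℝ) a t j := rfl

lemma pt_castSucc {m : ℕ} (a : Rd m) (t : ℝ) (i : Fin m) : pt a t i.castSucc = a i := by
  rw [pt_apply]
  simp

lemma pt_last {m : ℕ} (a : Rd m) (t : ℝ) : lastc (pt a t) = t := by
  rw [lastc_def, pt_apply]
  simp

lemma fst'_pt {m : ℕ} (a : Rd m) (t : ℝ) : fst' (pt a t) = a := by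
  ext i
  rw [fst'_apply, pt_castSucc]

lemma fst'_sub {m : ℕ} (z w : Rd (m+1)) : fst' (z - w) = fst' z - fst' w := rfl

lemma lastc_sub {m : ℕ} (z w : Rd (m+1)) : lastc (z - w) = lastc z - lastc w := rfl

lemma abs_lastc_le {m : ℕ} (v : Rd (m+1)) : |lastc v| ≤ ‖v‖ := by
  rw [EuclideanSpace.norm_eq, ← Real.sqrt_sq_eq_abs]
  apply Real.sqrt_le_sqrt
  have h := Finset.single_le_sum (f := fun i => ‖v i‖ ^ 2)
    (fun i _ => sq_nonneg _) (Finset.mem_univ (Fin.last m))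
  simpa [lastc, sq_abs] using h

lemma norm_fst'_le {m : ℕ} (v : Rd (m+1)) : ‖fst' v‖ ≤ ‖v‖ := by
  rw [EuclideanSpace.norm_eq, EuclideanSpace.norm_eq]
  apply Real.sqrt_le_sqrt
  rw [Fin.sum_univ_castSucc (f := fun i => ‖v i‖ ^ 2)]
  have : ∑ i : Fin m, ‖fst' v i‖ ^ 2 = ∑ i : Fin m, ‖v i.castSucc‖ ^ 2 := by
    simp [fst'_apply]
  rw [this]
  exact le_add_of_nonneg_right (sq_nonneg _)

lemma norm_sub_pt {m : ℕ} (z : Rd (m+1)) (t : ℝ) :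
    ‖z - pt (fst' z) t‖ = |lastc z - t| := by
  rw [EuclideanSpace.norm_eq, Fin.sum_univ_castSucc]
  have h : ∀ i : Fin m, ‖(z - pt (fst' z) t) i.castSucc‖ ^ 2 = 0 := by
    intro i
    have : (z - pt (fst' z) t) i.castSucc = z i.castSucc - pt (fst' z) t i.castSucc := rfl
    rw [this, pt_castSucc, fst'_apply, sub_self]
    simp
  have h2 : (z - pt (fst' z) t) (Fin.last m) = lastc z - t := by
    have : (z - pt (fst' z) t) (Fin.last m) = z (Fin.last m) - pt (fst' z) t (Fin.last m) := rfl
    rw [this]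
    have h3 := pt_last (fst' z) t
    rw [lastc_def] at h3
    rw [h3]
    rfl
  rw [Finset.sum_congr rfl (fun i _ => h i), h2]
  simp [Real.sqrt_sq_eq_abs, sq_abs]

lemma lipschitz_fst' {m : ℕ} : LipschitzWith 1 (fst' (m := m)) := by
  apply LipschitzWith.of_dist_le_mul
  intro z w
  rw [dist_eq_norm, dist_eq_norm, ← fst'_sub, NNReal.coe_one, one_mul]
  exact norm_fst'_le _

lemma lipschitz_lastc {m : ℕ} : LipschitzWith 1 (lastc (m := m)) := by
  apply LipschitzWith.of_dist_le_mul
  intro z w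
  rw [Real.dist_eq, dist_eq_norm, ← lastc_sub, NNReal.coe_one, one_mul]
  exact abs_lastc_le _

lemma continuous_fst' {m : ℕ} : Continuous (fst' (m := m)) := lipschitz_fst'.continuous

lemma continuous_lastc {m : ℕ} : Continuous (lastc (m := m)) := lipschitz_lastc.continuous

section Geometry
variable {m : ℕ} (φ : Rd m → ℝ) (M : ℝ)

lemma isOpen_epigraph (hφc : Continuous φ) :
    IsOpen {z : Rd (m+1) | φ (fst' z) < lastc z} :=
  isOpen_lt (hφc.comp continuous_fst') continuous_lastc

lemma pt_mem_frontier (hφc : Continuous φ) (a : Rd m) :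
    pt a (φ a) ∈ frontier {z : Rd (m+1) | φ (fst' z) < lastc z} := by
  rw [(isOpen_epigraph φ hφc).frontier_eq]
  constructor
  · rw [Metric.mem_closure_iff]
    intro r hr
    refine ⟨pt a (φ a + r/2), ?_, ?_⟩
    · show φ (fst' (pt a (φ a + r/2))) < lastc (pt a (φ a + r/2))
      rw [fst'_pt, pt_last]
      linarith
    · have he : pt a (φ a + r/2) = pt (fst' (pt a (φ a))) (φ a + r/2) := by rw [fst'_pt]
      rw [dist_eq_norm, he, norm_sub_pt, pt_last]
      rw [abs_of_nonpos (by linarith)]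
      linarith
  · show ¬ (φ (fst' (pt a (φ a))) < lastc (pt a (φ a)))
    rw [fst'_pt, pt_last]
    exact lt_irrefl _

lemma frontier_epigraph_subset (hφc : Continuous φ) :
    frontier {z : Rd (m+1) | φ (fst' z) < lastc z} ⊆ {z | lastc z = φ (fst' z)} := by
  rw [(isOpen_epigraph φ hφc).frontier_eq]
  rintro z ⟨hz1, hz2⟩
  have h1 : φ (fst' z) ≤ lastc z := by
    have : z ∈ {z : Rd (m+1) | φ (fst' z) ≤ lastc z} :=
      closure_minimal (fun w hw => le_of_lt hw)
        (isClosed_le (hφc.comp continuous_fst') continuous_lastc) hz1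
    exact this
  have h2 : ¬ (φ (fst' z) < lastc z) := hz2
  have := not_lt.1 h2
  exact le_antisymm this h1

lemma psi_diff_le (hM : 0 ≤ M) (hφ_lip : LipschitzWith M.toNNReal φ) (z w : Rd (m+1)) :
    |(lastc z - φ (fst' z)) - (lastc w - φ (fst' w))| ≤ (1+M) * ‖z - w‖ := by
  have h1 : |lastc z - lastc w| ≤ ‖z - w‖ := by rw [← lastc_sub]; exact abs_lastc_le _
  have h2 : |φ (fst' z) - φ (fst' w)| ≤ M * ‖z - w‖ := by
    have hd := hφ_lip.dist_le_mul (fst' z) (fst' w)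
    rw [Real.dist_eq, Real.coe_toNNReal M hM] at hd
    have h3 : dist (fst' z) (fst' w) ≤ ‖z - w‖ := by
      rw [dist_eq_norm, ← fst'_sub]; exact norm_fst'_le _
    have h4 : M * dist (fst' z) (fst' w) ≤ M * ‖z - w‖ :=
      mul_le_mul_of_nonneg_left h3 hM
    linarith
  have h5 : |(lastc z - φ (fst' z)) - (lastc w - φ (fst' w))|
      ≤ |lastc z - lastc w| + |φ (fst' z) - φ (fst' w)| := by
    have : (lastc z - φ (fst' z)) - (lastc w - φ (fst' w))
        = (lastc z - lastc w) - (φ (fst' z) - φ (fst' w)) := by ring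
    rw [this]
    exact abs_sub _ _
  linarith

lemma infDist_le_psi (hφc : Continuous φ) (z : Rd (m+1)) (hz : 0 ≤ lastc z - φ (fst' z)) :
    infDist z (frontier {z : Rd (m+1) | φ (fst' z) < lastc z}) ≤ lastc z - φ (fst' z) := by
  have hb := pt_mem_frontier φ hφc (fst' z)
  have h := infDist_le_dist_of_mem (x := z) hb
  rw [dist_eq_norm, norm_sub_pt, abs_of_nonneg hz] at h
  exact h

lemma psi_le_infDist (hM : 0 ≤ M) (hφ_lip : LipschitzWith M.toNNReal φ) (z : Rd (m+1)) :
    lastc z - φ (fst' z)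
      ≤ (1+M) * infDist z (frontier {z : Rd (m+1) | φ (fst' z) < lastc z}) := by
  have hφc := hφ_lip.continuous
  have hM1 : (0:ℝ) < 1 + M := by linarith
  have hne : (frontier {z : Rd (m+1) | φ (fst' z) < lastc z}).Nonempty :=
    ⟨_, pt_mem_frontier φ hφc 0⟩
  have key : ∀ w ∈ frontier {z : Rd (m+1) | φ (fst' z) < lastc z},
      (lastc z - φ (fst' z))/(1+M) ≤ dist z w := by
    intro w hw
    have hw0 : lastc w = φ (fst' w) := frontier_epigraph_subset φ hφc hw
    have hdf := psi_diff_le φ M hM hφ_lip z w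
    rw [hw0, sub_self, sub_zero] at hdf
    have h6 : lastc z - φ (fst' z) ≤ (1+M) * ‖z - w‖ := (le_abs_self _).trans hdf
    rw [div_le_iff₀ hM1, dist_eq_norm]
    linarith
  by_contra hlt
  push_neg at hlt
  have h7 : infDist z (frontier {z : Rd (m+1) | φ (fst' z) < lastc z})
      < (lastc z - φ (fst' z))/(1+M) := by
    rw [lt_div_iff₀ hM1]
    linarith
  obtain ⟨w, hw, hd⟩ := (infDist_lt_iff hne).1 h7
  exact absurd (key w hw) (by linarith)

end Geometry

lemma rpow_tail_bound (e τ s : ℝ) (he : 0 ≤ e) (hτ : 0 < τ) (hs : τ ≤ s) :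
    s ^ (-e) ≤ 2 ^ e * τ ^ (-e) * (1 + s/τ) ^ (-e) := by
  have hs0 : 0 < s := hτ.trans_le hs
  have ha : (1:ℝ) ≤ s/τ := (one_le_div hτ).2 hs
  have ha0 : (0:ℝ) < s/τ := by linarith
  have hA : (0:ℝ) < (s/τ) ^ e := Real.rpow_pos_of_pos ha0 e
  have hB : (0:ℝ) < (1 + s/τ) ^ e := Real.rpow_pos_of_pos (by linarith) e
  have h2e : (0:ℝ) < (2:ℝ) ^ e := Real.rpow_pos_of_pos (by norm_num) e
  have h1 : (1 + s/τ) ^ e ≤ 2 ^ e * (s/τ) ^ e := by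
    have := Real.rpow_le_rpow (by linarith : (0:ℝ) ≤ 1 + s/τ) (by linarith : 1 + s/τ ≤ 2 * (s/τ)) he
    rwa [Real.mul_rpow (by norm_num) ha0.le] at this
  have hinv : ((s/τ) ^ e)⁻¹ ≤ 2 ^ e * ((1 + s/τ) ^ e)⁻¹ := by
    rw [← div_eq_mul_inv, le_div_iff₀ hB, inv_mul_eq_div, div_le_iff₀ hA]
    linarith
  have hsplit : s ^ (-e) = τ ^ (-e) * (s/τ) ^ (-e) := by
    rw [← Real.mul_rpow hτ.le ha0.le, mul_div_cancel₀ _ (ne_of_gt hτ)]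
  rw [hsplit, Real.rpow_neg ha0.le, Real.rpow_neg (by linarith : (0:ℝ) ≤ 1 + s/τ)]
  calc τ ^ (-e) * ((s/τ) ^ e)⁻¹ ≤ τ ^ (-e) * (2 ^ e * ((1 + s/τ) ^ e)⁻¹) :=
        mul_le_mul_of_nonneg_left hinv (Real.rpow_nonneg hτ.le _)
    _ = 2 ^ e * τ ^ (-e) * ((1 + s/τ) ^ e)⁻¹ := by ring

lemma q_dbl_iter (q : ℝ → ℝ) (Cq : ℝ) (hCq : 1 ≤ Cq)
    (hq_dbl : ∀ r : ℝ, 0 < r → q (2 * r) ≤ Cq * q r) :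
    ∀ n : ℕ, ∀ r : ℝ, 0 < r → q (2^n * r) ≤ Cq^n * q r := by
  intro n
  induction n with
  | zero => intro r hr; simp
  | succ j ih =>
    intro r hr
    have h1 : (2:ℝ)^(j+1) * r = 2^j * (2*r) := by ring
    rw [h1]
    calc q (2^j*(2*r)) ≤ Cq^j * q (2*r) := ih (2*r) (by linarith)
      _ ≤ Cq^j * (Cq * q r) :=
          mul_le_mul_of_nonneg_left (hq_dbl r hr) (pow_nonneg (by linarith) j)
      _ = Cq^(j+1) * q r := by ring

lemma q_mono (q : ℝ → ℝ) (k : ℕ) (hk : 2 ≤ k) (hq_Ck : ContDiff ℝ k q)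
    (hq_deriv : ∀ r : ℝ, 0 ≤ r → 0 ≤ deriv q r ∧ deriv q r ≤ 1) :
    MonotoneOn q (Ici 0) := by
  apply monotoneOn_of_deriv_nonneg (convex_Ici 0) hq_Ck.continuous.continuousOn
  · intro x _
    exact ((hq_Ck.differentiable (by exact_mod_cast (by omega : k ≠ 0))).differentiableAt).differentiableWithinAt
  · intro x hx
    rw [interior_Ici] at hx
    exact (hq_deriv x (le_of_lt hx)).1

section VolumeBand

variable {m : ℕ}

lemma isOpen_absfst (R : ℝ) : IsOpen {z : Rd (m+1) | ∀ i, |fst' z i| < R} := by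
  have h : {z : Rd (m+1) | ∀ i, |fst' z i| < R} = ⋂ i, {z : Rd (m+1) | |fst' z i| < R} := by
    ext z
    simp
  rw [h]
  refine isOpen_iInter_of_finite fun i => isOpen_lt ?_ continuous_const
  exact continuous_abs.comp ((EuclideanSpace.proj i).continuous.comp continuous_fst')

lemma volume_band_le (φ : Rd m → ℝ) (hφc : Continuous φ) (R a b : ℝ) (hR : 0 ≤ R) :
    volume {z : Rd (m+1) | (∀ i, |fst' z i| < R) ∧
        φ (fst' z) + a < lastc z ∧ lastc z < φ (fst' z) + b}
      ≤ ENNReal.ofReal (b - a) * ENNReal.ofReal ((2*R)^m) := by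
  classical
  set T : Set (Rd (m+1)) := {z : Rd (m+1) | (∀ i, |fst' z i| < R) ∧
        φ (fst' z) + a < lastc z ∧ lastc z < φ (fst' z) + b} with hT
  have e1 := EuclideanSpace.volume_preserving_symm_measurableEquiv_toLp (Fin (m+1))
  have e2 := MeasureTheory.volume_preserving_piFinSuccAbove
    (fun _ : Fin (m+1) => ℝ) (Fin.last m)
  set E2 := MeasurableEquiv.piFinSuccAbove (fun _ : Fin (m+1) => ℝ) (Fin.last m) with hE2
  set F : Rd (m+1) → ℝ × (Fin m → ℝ) :=
    fun z => E2 ((MeasurableEquiv.toLp 2 (Fin (m+1) → ℝ)).symm z) with hF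
  have hFmp : MeasurePreserving F volume volume := e2.comp e1
  set φ2 : (Fin m → ℝ) → ℝ := fun w => φ ((EuclideanSpace.equiv (Fin m) ℝ).symm w) with hφ2
  have hφ2c : Continuous φ2 :=
    hφc.comp (EuclideanSpace.equiv (Fin m) ℝ).symm.continuous
  set T' : Set (ℝ × (Fin m → ℝ)) := {p | (∀ i, |p.2 i| < R) ∧
      φ2 p.2 + a < p.1 ∧ p.1 < φ2 p.2 + b} with hT'
  have hFz : ∀ z : Rd (m+1), F z = (lastc z, fun j => fst' z j) := by
    intro z
    have h1 : (F z).1 = lastc z := rfl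
    have h2 : (F z).2 = fun j => fst' z j := by
      funext j
      show z ((Fin.last m).succAbove j) = fst' z j
      rw [Fin.succAbove_last, fst'_apply]
    exact Prod.ext h1 h2
  have hpre : T = F ⁻¹' T' := by
    ext z
    have h2 : ((EuclideanSpace.equiv (Fin m) ℝ).symm fun j => fst' z j) = fst' z := rfl
    simp only [hT, Set.mem_setOf_eq, Set.mem_preimage, hFz z, hT', hφ2, h2]
  have hT'meas : MeasurableSet T' := by
    have h1 : IsOpen {p : ℝ × (Fin m → ℝ) | ∀ i, |p.2 i| < R} := by
      have : {p : ℝ × (Fin m → ℝ) | ∀ i, |p.2 i| < R}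
          = ⋂ i, {p : ℝ × (Fin m → ℝ) | |p.2 i| < R} := by ext p; simp
      rw [this]
      exact isOpen_iInter_of_finite fun i =>
        isOpen_lt (continuous_abs.comp ((continuous_apply i).comp continuous_snd))
          continuous_const
    have h2 : IsOpen {p : ℝ × (Fin m → ℝ) | φ2 p.2 + a < p.1} :=
      isOpen_lt ((hφ2c.comp continuous_snd).add continuous_const) continuous_fst
    have h3 : IsOpen {p : ℝ × (Fin m → ℝ) | p.1 < φ2 p.2 + b} :=
      isOpen_lt continuous_fst ((hφ2c.comp continuous_snd).add continuous_const)
    have : T' = {p : ℝ × (Fin m → ℝ) | ∀ i, |p.2 i| < R}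
        ∩ ({p : ℝ × (Fin m → ℝ) | φ2 p.2 + a < p.1}
          ∩ {p : ℝ × (Fin m → ℝ) | p.1 < φ2 p.2 + b}) := by
      ext p; simp [hT', and_assoc]
    rw [this]
    exact (h1.inter (h2.inter h3)).measurableSet
  rw [hpre, hFmp.measure_preimage hT'meas.nullMeasurableSet]
  set Q' : Set (Fin m → ℝ) := {w | ∀ i, |w i| < R} with hQ'
  have hQ'eq : Q' = Set.pi Set.univ (fun _ : Fin m => Ioo (-R) R) := by
    ext w; simp [hQ', abs_lt]
  have hQ'meas : MeasurableSet Q' := by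
    rw [hQ'eq]; exact MeasurableSet.univ_pi fun _ => measurableSet_Ioo
  have hvolQ' : volume Q' = ENNReal.ofReal ((2*R)^m) := by
    rw [hQ'eq, volume_pi_pi]
    simp only [Real.volume_Ioo, sub_neg_eq_add]
    rw [Finset.prod_const, Finset.card_univ, Fintype.card_fin,
      ← ENNReal.ofReal_pow (by linarith)]
    ring_nf
  have hmain : (volume : Measure (ℝ × (Fin m → ℝ))) T'
      ≤ ENNReal.ofReal (b - a) * volume Q' := by
    rw [MeasureTheory.Measure.volume_eq_prod, MeasureTheory.Measure.prod_apply_symm hT'meas]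
    have hptwise : ∀ w : Fin m → ℝ,
        volume ((fun t => (t, w)) ⁻¹' T')
          ≤ Q'.indicator (fun _ => ENNReal.ofReal (b - a)) w := by
      intro w
      by_cases hw : w ∈ Q'
      · have : ((fun t => (t, w)) ⁻¹' T') ⊆ Ioo (φ2 w + a) (φ2 w + b) := by
          intro t ht
          exact ⟨ht.2.1, ht.2.2⟩
        calc volume ((fun t => (t, w)) ⁻¹' T') ≤ volume (Ioo (φ2 w + a) (φ2 w + b)) :=
              measure_mono this
          _ = ENNReal.ofReal (b - a) := by rw [Real.volume_Ioo]; ring_nf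
          _ = Q'.indicator (fun _ => ENNReal.ofReal (b - a)) w := by
              rw [Set.indicator_of_mem hw]
      · have : ((fun t => (t, w)) ⁻¹' T') = ∅ := by
          ext t
          simp only [Set.mem_preimage, hT', Set.mem_setOf_eq, Set.mem_empty_iff_false,
            iff_false]
          intro hc
          exact hw hc.1
        rw [this, Set.indicator_of_notMem hw]
        simp
    calc ∫⁻ w, volume ((fun t => (t, w)) ⁻¹' T') ∂volume
        ≤ ∫⁻ w, Q'.indicator (fun _ => ENNReal.ofReal (b - a)) w ∂volume :=
          MeasureTheory.lintegral_mono hptwise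
      _ = ENNReal.ofReal (b - a) * volume Q' := by
          rw [MeasureTheory.lintegral_indicator hQ'meas, MeasureTheory.setLIntegral_const]
  calc (volume : Measure (ℝ × (Fin m → ℝ))) T' ≤ ENNReal.ofReal (b - a) * volume Q' := hmain
    _ = ENNReal.ofReal (b - a) * ENNReal.ofReal ((2*R)^m) := by rw [hvolQ']

end VolumeBand

set_option maxHeartbeats 1000000 in
open Classical in
/-- finiteness of the reversed-kernel boundary integral in the special
Lipschitz epigraph setting (total dimension `d = m + 1`). -/
theorem statement_5 {m : ℕ}
    -- the Lipschitz epigraph Ω_φ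
    (φ : Rd m → ℝ) (M : ℝ) (hM : 0 ≤ M)
    (hφ_lip : LipschitzWith (Real.toNNReal M) φ) (hφ_nonneg : ∀ x', 0 ≤ φ x')
    -- (A_λ) on the epigraph
    (lam : Rd (m+1) → ℝ) (κ0 κ1 : ℝ) (hκ0 : 1 ≤ κ0) (hκ1 : 0 < κ1)
    (hlam_nonneg : ∀ x ∈ closure {z : Rd (m+1) | φ (fst' z) < lastc z}, 0 ≤ lam x)
    (hlam_lb : ∀ x ∈ closure {z : Rd (m+1) | φ (fst' z) < lastc z},
      κ0⁻¹ * Metric.infDist x (frontier {z : Rd (m+1) | φ (fst' z) < lastc z}) ≤ lam x)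
    (hlam_ub : ∀ x ∈ closure {z : Rd (m+1) | φ (fst' z) < lastc z},
      lam x ≤ κ0 * Metric.infDist x (frontier {z : Rd (m+1) | φ (fst' z) < lastc z}))
    (hlam_lip : ∀ x ∈ {z : Rd (m+1) | φ (fst' z) < lastc z},
      ∀ y ∈ {z : Rd (m+1) | φ (fst' z) < lastc z}, |lam x - lam y| ≤ κ1 * ‖x - y‖)
    -- (A_q) with q ∈ C^k, k ≥ 2
    (q : ℝ → ℝ) (Cq cq : ℝ) (k : ℕ) (hk : 2 ≤ k) (hq_Ck : ContDiff ℝ k q) (hq0 : q 0 = 0)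
    (hq_pos : ∀ r : ℝ, 0 < r → 0 < q r ∧ q r ≤ r)
    (hq_deriv : ∀ r : ℝ, 0 ≤ r → 0 ≤ deriv q r ∧ deriv q r ≤ 1)
    (hcq : 0 < cq) (hq_deriv_pos : ∀ r ∈ Set.Ioc (0:ℝ) cq, 0 < deriv q r)
    (hCq : 1 ≤ Cq) (hq_dbl : ∀ r : ℝ, 0 < r → q (2 * r) ≤ Cq * q r)
    -- (A_δ)
    (δ : ℝ) (hδ : 0 < δ)
    (hδ0 : δ < 1 / (3 * max 1 (max κ1 (Cq * κ0 ^ Real.logb 2 Cq))))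
    -- (A_ρ)
    (ρ : ℝ → ℝ) (cρ : ℝ) (hcρ : 0 < cρ)
    (hρ_nonneg : ∀ t, 0 ≤ ρ t) (hρ_even : ∀ t, ρ (-t) = ρ t)
    (hρ_bdd : ∃ Mρ, ∀ t, ρ t ≤ Mρ)
    (hρ_supp1 : Set.Icc (-cρ) cρ ⊆ tsupport ρ)
    (hρ_supp2 : tsupport ρ ⊆ Set.Ioo (-1) 1)
    -- (A_Φ) with p ≥ 2
    (p : ℝ) (hp : 2 ≤ p) (Φ : ℝ → ℝ) (cΦ CΦ : ℝ) (hcΦ : 0 < cΦ) (hCΦ : cΦ ≤ CΦ)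
    (hΦ_C2 : ContDiff ℝ 2 Φ) (hΦ_even : ∀ t, Φ (-t) = Φ t)
    (hΦ_conv : ConvexOn ℝ Set.univ Φ)
    (hΦ_bd : ∀ t : ℝ, cΦ * |t| ^ p ≤ Φ t ∧ Φ t ≤ CΦ * |t| ^ p)
    (hΦ'_bd : ∀ t : ℝ, |deriv Φ t| ≤ CΦ * |t| ^ (p - 1))
    (hΦ'_coer : ∀ t : ℝ, |t| ^ p ≤ deriv Φ t * t)
    (hΦ''_bd : ∀ t : ℝ, cΦ * |t| ^ (p - 2) ≤ |deriv (deriv Φ) t| ∧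
        |deriv (deriv Φ) t| ≤ CΦ * |t| ^ (p - 2))
    -- exponent β ∈ [0, d + p)
    (β : ℝ) (hβ0 : 0 ≤ β) (hβub : β < (m+1 : ℝ) + p)
    -- side length of the cube Q
    (ϱ : ℝ) (hϱ : 0 < ϱ)
    -- u, v ∈ C²_b(ℝ^d)
    (u : Rd (m+1) → ℝ) (hu : ContDiff ℝ 2 u)
    (hub : ∃ Mu, ∀ x, |u x| ≤ Mu ∧ ‖gradient u x‖ ≤ Mu ∧ ‖iteratedFDeriv ℝ 2 u x‖ ≤ Mu)
    (v : Rd (m+1) → ℝ) (hv : ContDiff ℝ 2 v)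
    (hvb : ∃ Mv, ∀ x, |v x| ≤ Mv ∧ ‖gradient v x‖ ≤ Mv ∧ ‖iteratedFDeriv ℝ 2 v x‖ ≤ Mv) :
    -- conclusion: for all 0 < ε ≪ min{δ, ϱ}, the double integral is at most
    -- C·‖∇u‖_∞^{p−1}·‖v‖_∞ / ε², with C independent of ε
    ∃ ε₀ : ℝ, 0 < ε₀ ∧ ε₀ ≤ min δ ϱ ∧ ∃ C > 0,
      ∀ ε : ℝ, 0 < ε → ε < ε₀ →
      ∀ Mu Mv : ℝ, (∀ x, ‖gradient u x‖ ≤ Mu) → (∀ x, |v x| ≤ Mv) →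
        (∫ x in {z : Rd (m+1) | (∀ i, |fst' z i| < ϱ) ∧
              φ (fst' z) < lastc z ∧ lastc z < φ (fst' z) + ε},
            ∫ y in {z : Rd (m+1) | (∀ i, |fst' z i| < 2*ϱ) ∧ φ (fst' z) + ε < lastc z},
              rhoKerEps ε δ β p ρ q lam y x *
                deriv Φ (⟪gradient u x, ‖x - y‖⁻¹ • (x - y)⟫) * (v x / ‖x - y‖))
          ≤ C * Mu ^ (p - 1) * Mv / ε ^ 2 := by
  have hφc : Continuous φ := hφ_lip.continuous
  have hM1 : (0:ℝ) < 1 + M := by linarith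
  have hκ0' : (0:ℝ) < κ0 := by linarith
  have hCΦ0 : (0:ℝ) < CΦ := lt_of_lt_of_le hcΦ hCΦ
  obtain ⟨Mρ, hMρ⟩ := hρ_bdd
  have hMρ0 : 0 ≤ Mρ := le_trans (hρ_nonneg 0) (hMρ 0)
  -- reference integral
  set f0 : Rd (m+1) → ℝ := fun z => (1 + ‖z‖) ^ (-((m:ℝ)+2)) with hf0
  have hf0i : Integrable f0 := by
    rw [hf0]
    apply integrable_one_add_norm
    rw [finrank_euclideanSpace_fin]
    push_cast
    linarith
  have hf0nn : ∀ z, 0 ≤ f0 z := fun z => Real.rpow_nonneg (by positivity) _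
  set I0 : ℝ := ∫ z, f0 z with hI0
  have hI0nn : 0 ≤ I0 := integral_nonneg hf0nn
  -- doubling exponent
  obtain ⟨N, hN⟩ := pow_unbounded_of_one_lt (y := (2:ℝ)) (2*κ0*(κ0*(1+M))) (by norm_num)
  have hqmono : MonotoneOn q (Ici 0) := q_mono q k hk hq_Ck hq_deriv
  -- the constant
  set K : ℝ := (Mρ+1)*CΦ*2^((m:ℝ)+2)*I0*(2*ϱ)^m*(1+M)*Cq^N with hK
  have hKnn : 0 ≤ K := by
    have h1 : (0:ℝ) ≤ Mρ + 1 := by linarith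
    have h2 : (0:ℝ) ≤ 2^((m:ℝ)+2) := Real.rpow_nonneg (by norm_num) _
    have h3 : (0:ℝ) ≤ (2*ϱ)^m := by positivity
    have h4 : (0:ℝ) ≤ Cq^N := by positivity
    have := mul_nonneg (mul_nonneg (mul_nonneg (mul_nonneg (mul_nonneg
      (mul_nonneg h1 hCΦ0.le) h2) hI0nn) h3) hM1.le) h4
    exact this
  refine ⟨min 1 (min δ ϱ), by positivity, min_le_right _ _, K + 1, by linarith, ?_⟩
  intro ε hε0 hεlt Mu Mv hMu hMv
  have hε1 : ε < 1 := lt_of_lt_of_le hεlt (min_le_left _ _)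
  have hMu0 : 0 ≤ Mu := le_trans (norm_nonneg _) (hMu (pt 0 0))
  have hMv0 : 0 ≤ Mv := le_trans (abs_nonneg _) (hMv (pt 0 0))
  have hP : 0 ≤ Mu^(p-1) * Mv := mul_nonneg (Real.rpow_nonneg hMu0 _) hMv0
  -- δ * κ1 < 1/3
  have hδκ1 : δ * κ1 < 1/3 := by
    set Mx : ℝ := max 1 (max κ1 (Cq * κ0 ^ Real.logb 2 Cq)) with hMx
    have hMx1 : (1:ℝ) ≤ Mx := le_max_left _ _
    have hMxpos : (0:ℝ) < Mx := by linarith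
    have hκ1Mx : κ1 ≤ Mx := le_trans (le_max_left _ _) (le_max_right _ _)
    have h1 : δ * κ1 ≤ δ * Mx := mul_le_mul_of_nonneg_left hκ1Mx hδ.le
    have h2 : δ * Mx < (1 / (3 * Mx)) * Mx := mul_lt_mul_of_pos_right hδ0 hMxpos
    have h3 : (1 / (3 * Mx)) * Mx = 1/3 := by field_simp
    linarith
  -- geometric quantities
  set c2 : ℝ := (κ0 * (1+M))⁻¹ with hc2
  have hc2pos : 0 < c2 := inv_pos.mpr (mul_pos hκ0' hM1)
  have hqc2pos : 0 < q (c2 * ε) := (hq_pos _ (mul_pos hc2pos hε0)).1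
  set ηm : ℝ := δ * q (c2 * ε) with hηm
  have hηmpos : 0 < ηm := mul_pos hδ hqc2pos
  set τ : ℝ := ε * ηm with hτdef
  have hτpos : 0 < τ := mul_pos hε0 hηmpos
  have hq2κ0nn : 0 ≤ q (2*κ0*ε) := le_of_lt (hq_pos _ (by positivity)).1
  set ηp : ℝ := δ * q (2*κ0*ε) with hηp
  have hηpnn : 0 ≤ ηp := mul_nonneg hδ.le hq2κ0nn
  have hdbl : q (2*κ0*ε) ≤ Cq^N * q (c2*ε) := by
    have h1 : 2*κ0*ε ≤ 2^N * (c2*ε) := by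
      have h2 : 2*κ0*(κ0*(1+M)) ≤ 2^N := hN.le
      have h3 : 2*κ0*ε = (2*κ0*(κ0*(1+M))) * (c2*ε) := by
        rw [hc2]
        field_simp
      rw [h3]
      exact mul_le_mul_of_nonneg_right h2 (by positivity)
    calc q (2*κ0*ε) ≤ q (2^N * (c2*ε)) :=
          hqmono (mem_Ici.mpr (by positivity)) (mem_Ici.mpr (by positivity)) h1
      _ ≤ Cq^N * q (c2*ε) := q_dbl_iter q Cq hCq hq_dbl N _ (by positivity)
  set Sx : Set (Rd (m+1)) := {z : Rd (m+1) | (∀ i, |fst' z i| < ϱ) ∧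
      φ (fst' z) < lastc z ∧ lastc z < φ (fst' z) + ε} with hSxdef
  set Sy : Set (Rd (m+1)) := {z : Rd (m+1) | (∀ i, |fst' z i| < 2*ϱ) ∧
      φ (fst' z) + ε < lastc z} with hSydef
  have key : ∀ x ∈ Sx, ∀ y ∈ Sy,
      (ε ≤ ‖x - y‖ / etaD δ q lam y ∧ ‖x - y‖ / etaD δ q lam y < 1) →
      τ ≤ ‖x - y‖ ∧ ‖x - y‖ < ηp ∧ etaD δ q lam y ≤ ηp ∧ 0 < etaD δ q lam y ∧
        ε - (1+M)*ηp < lastc x - φ (fst' x) := by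
    intro x hx y hy hcond
    obtain ⟨h1, h2⟩ := hcond
    obtain ⟨hx1, hx2, hx3⟩ := hx
    obtain ⟨hy1, hy2⟩ := hy
    have hxS : x ∈ {z : Rd (m+1) | φ (fst' z) < lastc z} := hx2
    have hyS : y ∈ {z : Rd (m+1) | φ (fst' z) < lastc z} := by
      show φ (fst' y) < lastc y
      linarith
    have hη_pos : 0 < etaD δ q lam y := by
      rcases lt_trichotomy (etaD δ q lam y) 0 with hlt | heq | hgt
      · exfalso
        have hd : ‖x - y‖ / etaD δ q lam y ≤ 0 :=
          div_nonpos_of_nonneg_of_nonpos (norm_nonneg _) hlt.le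
        linarith
      · exfalso
        have hd : ‖x - y‖ / etaD δ q lam y = 0 := by rw [heq, div_zero]
        linarith
      · exact hgt
    have hs_pos : 0 < ‖x - y‖ := by
      rcases eq_or_lt_of_le (norm_nonneg (x - y)) with heq | h
      · exfalso
        have hd : ‖x - y‖ / etaD δ q lam y = 0 := by rw [← heq, zero_div]
        linarith
      · exact h
    have hsεη : ε * etaD δ q lam y ≤ ‖x - y‖ := (le_div_iff₀ hη_pos).mp h1
    have hsη : ‖x - y‖ < etaD δ q lam y := (div_lt_one hη_pos).mp h2
    have hqy_pos : 0 < q (lam y) := by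
      have h3 := hη_pos
      rw [etaD_def] at h3
      rcases mul_pos_iff.mp h3 with ⟨_, hq⟩ | ⟨hneg, _⟩
      · exact hq
      · linarith
    have hlamy_nonneg : 0 ≤ lam y := hlam_nonneg y (subset_closure hyS)
    have hlamy_pos : 0 < lam y := by
      rcases eq_or_lt_of_le hlamy_nonneg with heq | h
      · exfalso
        rw [← heq, hq0] at hqy_pos
        exact lt_irrefl 0 hqy_pos
      · exact h
    have hqley : q (lam y) ≤ lam y := (hq_pos _ hlamy_pos).2
    have hψy : ε < lastc y - φ (fst' y) := by linarith
    have hinf_y := psi_le_infDist φ M hM hφ_lip y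
    have hlb := hlam_lb y (subset_closure hyS)
    have h5 : ε / (1+M) ≤ infDist y (frontier {z : Rd (m+1) | φ (fst' z) < lastc z}) := by
      rw [div_le_iff₀ hM1]
      linarith [hinf_y]
    have hlamy_lb : c2 * ε ≤ lam y := by
      have h6 : c2 * ε = κ0⁻¹ * (ε/(1+M)) := by rw [hc2]; field_simp
      rw [h6]
      calc κ0⁻¹ * (ε/(1+M))
          ≤ κ0⁻¹ * infDist y (frontier {z : Rd (m+1) | φ (fst' z) < lastc z}) :=
            mul_le_mul_of_nonneg_left h5 (by positivity)
        _ ≤ lam y := hlb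
    have hηm_le : ηm ≤ etaD δ q lam y := by
      rw [hηm]
      exact mul_le_mul_of_nonneg_left
        (hqmono (mem_Ici.mpr (by positivity)) (mem_Ici.mpr hlamy_nonneg) hlamy_lb) hδ.le
    have hτle : τ ≤ ‖x - y‖ := by
      rw [hτdef]
      calc ε * ηm ≤ ε * etaD δ q lam y := mul_le_mul_of_nonneg_left hηm_le hε0.le
        _ ≤ ‖x - y‖ := hsεη
    have hψx_pos : 0 < lastc x - φ (fst' x) := by linarith
    have hub' := hlam_ub x (subset_closure hxS)
    have hid := infDist_le_psi φ hφc x hψx_pos.le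
    have hlamx_ub : lam x ≤ κ0 * ε := by
      have h7 : κ0 * infDist x (frontier {z : Rd (m+1) | φ (fst' z) < lastc z})
          ≤ κ0 * (lastc x - φ (fst' x)) := mul_le_mul_of_nonneg_left hid hκ0'.le
      have h8 : κ0 * (lastc x - φ (fst' x)) ≤ κ0 * ε :=
        mul_le_mul_of_nonneg_left (by linarith) hκ0'.le
      linarith
    have hlip' := hlam_lip x hxS y hyS
    have h9 : lam y - lam x ≤ κ1 * ‖x - y‖ := by
      have h10 : lam y - lam x ≤ |lam y - lam x| := le_abs_self _
      rw [abs_sub_comm] at h10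
      linarith
    have hetadl : etaD δ q lam y ≤ δ * lam y := mul_le_mul_of_nonneg_left hqley hδ.le
    have hs32 : ‖x - y‖ < (3/2)*(δ*(κ0*ε)) := by
      have hh1 : δ * lam y ≤ δ * (lam x + κ1 * ‖x - y‖) :=
        mul_le_mul_of_nonneg_left (by linarith) hδ.le
      have hh2 : δ * lam x ≤ δ * (κ0 * ε) := mul_le_mul_of_nonneg_left hlamx_ub hδ.le
      have hh3 : δ * (lam x + κ1*‖x-y‖) = δ*lam x + δ*κ1*‖x-y‖ := by ring
      have h11 : δ*κ1*‖x - y‖ < 1/3*‖x - y‖ := mul_lt_mul_of_pos_right hδκ1 hs_pos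
      linarith
    have hlamy_ub : lam y ≤ 2*κ0*ε := by
      have hA : κ1*‖x-y‖ ≤ κ1*((3/2)*(δ*(κ0*ε))) := mul_le_mul_of_nonneg_left hs32.le hκ1.le
      have hBq : κ1*((3/2)*(δ*(κ0*ε))) = (3/2)*(δ*κ1)*(κ0*ε) := by ring
      have hD : (3/2)*(δ*κ1)*(κ0*ε) ≤ (3/2)*(1/3)*(κ0*ε) :=
        mul_le_mul_of_nonneg_right (by linarith) (by positivity)
      have hE : (0:ℝ) ≤ κ0*ε := by positivity
      linarith
    have hη_le_ηp : etaD δ q lam y ≤ ηp := by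
      rw [hηp]
      exact mul_le_mul_of_nonneg_left
        (hqmono (mem_Ici.mpr hlamy_nonneg) (mem_Ici.mpr (by positivity)) hlamy_ub) hδ.le
    have hs_lt_ηp : ‖x - y‖ < ηp := lt_of_lt_of_le hsη hη_le_ηp
    have hψdiff := psi_diff_le φ M hM hφ_lip y x
    have hfinal : ε - (1+M)*ηp < lastc x - φ (fst' x) := by
      have h12 : (lastc y - φ (fst' y)) - (lastc x - φ (fst' x)) ≤ (1+M)*‖y - x‖ :=
        (le_abs_self _).trans hψdiff
      rw [norm_sub_rev] at h12
      have h13 : (1+M)*‖x - y‖ ≤ (1+M)*ηp := mul_le_mul_of_nonneg_left hs_lt_ηp.le hM1.le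
      linarith
    exact ⟨hτle, hs_lt_ηp, hη_le_ηp, hη_pos, hfinal⟩
  set coef : ℝ := (Mρ+1) * (CΦ * Mu^(p-1) * Mv) * 2^((m:ℝ)+2) * τ^(-((m:ℝ)+2)) with hcoef
  have hfac0 : (0:ℝ) ≤ (Mρ+1) * (CΦ * Mu^(p-1) * Mv) :=
    mul_nonneg (by linarith) (mul_nonneg (mul_nonneg hCΦ0.le (Real.rpow_nonneg hMu0 _)) hMv0)
  have hcoefnn : 0 ≤ coef := by
    refine mul_nonneg (mul_nonneg hfac0 ?_) ?_
    · exact Real.rpow_nonneg (by norm_num) _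
    · exact Real.rpow_nonneg hτpos.le _
  have hgb : ∀ x ∈ Sx, ∀ y ∈ Sy,
      ‖rhoKerEps ε δ β p ρ q lam y x * deriv Φ (⟪gradient u x, ‖x - y‖⁻¹ • (x - y)⟫) * (v x / ‖x - y‖)‖ ≤ coef * f0 (τ⁻¹ • (y - x)) := by
    intro x hx y hy
    by_cases hcond : (ε ≤ ‖x - y‖ / etaD δ q lam y ∧ ‖x - y‖ / etaD δ q lam y < 1)
    case neg =>
      rw [rhoKerEps, if_neg hcond, zero_mul, zero_mul, norm_zero]
      exact mul_nonneg hcoefnn (hf0nn _)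
    case pos =>
      obtain ⟨hτle, hsltp, hηlep, hηpos2, hslab⟩ := key x hx y hy hcond
      have hs_pos : 0 < ‖x - y‖ := lt_of_lt_of_le hτpos hτle
      have hr_pos : 0 < ‖x - y‖ / etaD δ q lam y := div_pos hs_pos hηpos2
      have hK0 : 0 ≤ rhoKerEps ε δ β p ρ q lam y x := by
        rw [rhoKerEps, if_pos hcond, rhoKer]
        exact mul_nonneg (mul_nonneg (Real.rpow_nonneg hηpos2.le _) (hρ_nonneg _))
          (Real.rpow_nonneg hr_pos.le _)
      have hKb : rhoKerEps ε δ β p ρ q lam y x ≤ (Mρ+1) * ‖x - y‖^(-((m:ℝ)+1)) := by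
        rw [rhoKerEps, if_pos hcond, rhoKer]
        have hcast : (-((m+1 : ℕ):ℝ)) = -((m:ℝ)+1) := by push_cast; ring
        rw [hcast]
        have hrle : (‖x - y‖ / etaD δ q lam y) ^ (p - β)
            ≤ (‖x - y‖ / etaD δ q lam y) ^ (-((m:ℝ)+1)) := by
          have hsplit : (‖x - y‖ / etaD δ q lam y) ^ (p-β)
              = (‖x - y‖ / etaD δ q lam y) ^ (-((m:ℝ)+1))
                * (‖x - y‖ / etaD δ q lam y) ^ (p-β+((m:ℝ)+1)) := by
            rw [← Real.rpow_add hr_pos]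
            ring_nf
          rw [hsplit]
          have hle1 : (‖x - y‖ / etaD δ q lam y) ^ (p-β+((m:ℝ)+1)) ≤ 1 :=
            Real.rpow_le_one hr_pos.le hcond.2.le (by push_cast at hβub ⊢; linarith)
          calc (‖x - y‖ / etaD δ q lam y) ^ (-((m:ℝ)+1))
                * (‖x - y‖ / etaD δ q lam y) ^ (p-β+((m:ℝ)+1))
              ≤ (‖x - y‖ / etaD δ q lam y) ^ (-((m:ℝ)+1)) * 1 :=
                mul_le_mul_of_nonneg_left hle1 (Real.rpow_nonneg hr_pos.le _)
            _ = (‖x - y‖ / etaD δ q lam y) ^ (-((m:ℝ)+1)) := mul_one _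
        have hρb : ρ (‖x - y‖ / etaD δ q lam y) ≤ Mρ + 1 := le_trans (hMρ _) (by linarith)
        have hcollapse : (etaD δ q lam y) ^ (-((m:ℝ)+1))
            * (‖x - y‖ / etaD δ q lam y) ^ (-((m:ℝ)+1)) = ‖x - y‖ ^ (-((m:ℝ)+1)) := by
          rw [← Real.mul_rpow hηpos2.le hr_pos.le, mul_comm (etaD δ q lam y),
            div_mul_cancel₀ _ (ne_of_gt hηpos2)]
        have ha0 : (0:ℝ) ≤ (etaD δ q lam y) ^ (-((m:ℝ)+1)) := Real.rpow_nonneg hηpos2.le _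
        calc (etaD δ q lam y) ^ (-((m:ℝ)+1)) * ρ (‖x - y‖ / etaD δ q lam y)
              * (‖x - y‖ / etaD δ q lam y) ^ (p-β)
            ≤ ((etaD δ q lam y) ^ (-((m:ℝ)+1)) * (Mρ+1))
              * (‖x - y‖ / etaD δ q lam y) ^ (-((m:ℝ)+1)) := by
              apply mul_le_mul (mul_le_mul_of_nonneg_left hρb ha0) hrle
                (Real.rpow_nonneg hr_pos.le _) (mul_nonneg ha0 (by linarith))
          _ = (Mρ+1) * ((etaD δ q lam y) ^ (-((m:ℝ)+1))
              * (‖x - y‖ / etaD δ q lam y) ^ (-((m:ℝ)+1))) := by ring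
          _ = (Mρ+1) * ‖x - y‖ ^ (-((m:ℝ)+1)) := by rw [hcollapse]
      have hunit : ‖‖x - y‖⁻¹ • (x - y)‖ = 1 := by
        rw [norm_smul, norm_inv, norm_norm]
        field_simp
      have htbd : |⟪gradient u x, ‖x - y‖⁻¹ • (x - y)⟫| ≤ Mu := by
        calc |⟪gradient u x, ‖x - y‖⁻¹ • (x - y)⟫|
            ≤ ‖gradient u x‖ * ‖‖x - y‖⁻¹ • (x - y)‖ := abs_real_inner_le_norm _ _
          _ = ‖gradient u x‖ := by rw [hunit, mul_one]
          _ ≤ Mu := hMu x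
      have hPhib : |deriv Φ (⟪gradient u x, ‖x - y‖⁻¹ • (x - y)⟫)| ≤ CΦ * Mu^(p-1) := by
        refine (hΦ'_bd _).trans ?_
        exact mul_le_mul_of_nonneg_left
          (Real.rpow_le_rpow (abs_nonneg _) htbd (by linarith)) hCΦ0.le
      have hvxb : |v x / ‖x - y‖| ≤ Mv / ‖x - y‖ := by
        rw [abs_div, abs_norm]
        gcongr
        exact hMv x
      have hnormeq : ‖rhoKerEps ε δ β p ρ q lam y x * deriv Φ (⟪gradient u x, ‖x - y‖⁻¹ • (x - y)⟫) * (v x / ‖x - y‖)‖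
          = rhoKerEps ε δ β p ρ q lam y x
            * |deriv Φ (⟪gradient u x, ‖x - y‖⁻¹ • (x - y)⟫)| * |v x / ‖x - y‖| := by
        rw [Real.norm_eq_abs, abs_mul, abs_mul, abs_of_nonneg hK0]
      rw [hnormeq]
      have hstep : rhoKerEps ε δ β p ρ q lam y x
            * |deriv Φ (⟪gradient u x, ‖x - y‖⁻¹ • (x - y)⟫)| * |v x / ‖x - y‖|
          ≤ ((Mρ+1) * ‖x - y‖^(-((m:ℝ)+1))) * (CΦ * Mu^(p-1)) * (Mv / ‖x - y‖) := by
        apply mul_le_mul _ hvxb (abs_nonneg _)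
        · apply mul_nonneg (mul_nonneg (by linarith) (Real.rpow_nonneg (norm_nonneg _) _))
            (mul_nonneg hCΦ0.le (Real.rpow_nonneg hMu0 _))
        · exact mul_le_mul hKb hPhib (abs_nonneg _)
            (mul_nonneg (by linarith) (Real.rpow_nonneg (norm_nonneg _) _))
      refine hstep.trans ?_
      have hsm2 : ‖x - y‖^(-((m:ℝ)+1)) * ‖x - y‖⁻¹ = ‖x - y‖^(-((m:ℝ)+2)) := by
        rw [← Real.rpow_neg_one ‖x - y‖, ← Real.rpow_add hs_pos]
        congr 1
        ring
      have hnorms : ‖τ⁻¹ • (y - x)‖ = ‖x - y‖ / τ := by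
        rw [norm_smul, norm_inv, Real.norm_eq_abs, abs_of_pos hτpos, norm_sub_rev,
          div_eq_inv_mul]
      have htail := rpow_tail_bound ((m:ℝ)+2) τ ‖x - y‖ (by positivity) hτpos hτle
      have hf0eq : f0 (τ⁻¹ • (y - x)) = (1 + ‖x - y‖/τ) ^ (-((m:ℝ)+2)) := by
        rw [hf0]
        simp only [hnorms]
      calc ((Mρ+1) * ‖x - y‖^(-((m:ℝ)+1))) * (CΦ * Mu^(p-1)) * (Mv / ‖x - y‖)
          = ((Mρ+1) * (CΦ * Mu^(p-1) * Mv)) * (‖x - y‖^(-((m:ℝ)+1)) * ‖x - y‖⁻¹) := by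
            rw [div_eq_mul_inv]
            ring
        _ = ((Mρ+1) * (CΦ * Mu^(p-1) * Mv)) * ‖x - y‖^(-((m:ℝ)+2)) := by rw [hsm2]
        _ ≤ ((Mρ+1) * (CΦ * Mu^(p-1) * Mv))
            * (2^((m:ℝ)+2) * τ^(-((m:ℝ)+2)) * (1 + ‖x - y‖/τ)^(-((m:ℝ)+2))) :=
            mul_le_mul_of_nonneg_left htail hfac0
        _ = coef * (1 + ‖x - y‖/τ)^(-((m:ℝ)+2)) := by rw [hcoef]; ring
        _ = coef * f0 (τ⁻¹ • (y - x)) := by rw [hf0eq]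
  -- measurability of the sets
  have hSymeas : MeasurableSet Sy := by
    have hset : Sy = {z : Rd (m+1) | ∀ i, |fst' z i| < 2*ϱ}
        ∩ {z : Rd (m+1) | φ (fst' z) + ε < lastc z} := by
      rw [hSydef]
      ext z
      simp [Set.mem_setOf_eq, Set.mem_inter_iff]
    rw [hset]
    exact ((isOpen_absfst (2*ϱ)).inter
      (isOpen_lt ((hφc.comp continuous_fst').add continuous_const) continuous_lastc)).measurableSet
  have hSxmeas : MeasurableSet Sx := by
    have hset : Sx = {z : Rd (m+1) | ∀ i, |fst' z i| < ϱ}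
        ∩ ({z : Rd (m+1) | φ (fst' z) < lastc z}
          ∩ {z : Rd (m+1) | lastc z < φ (fst' z) + ε}) := by
      rw [hSxdef]
      ext z
      simp [Set.mem_setOf_eq, Set.mem_inter_iff, and_assoc]
    rw [hset]
    exact ((isOpen_absfst ϱ).inter
      ((isOpen_lt (hφc.comp continuous_fst') continuous_lastc).inter
        (isOpen_lt continuous_lastc ((hφc.comp continuous_fst').add continuous_const)))).measurableSet
  set W : Set (Rd (m+1)) := {z : Rd (m+1) | (∀ i, |fst' z i| < ϱ) ∧
      φ (fst' z) + (ε - (1+M)*ηp) < lastc z ∧ lastc z < φ (fst' z) + ε} with hWdef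
  have hWmeas : MeasurableSet W := by
    have hset : W = {z : Rd (m+1) | ∀ i, |fst' z i| < ϱ}
        ∩ ({z : Rd (m+1) | φ (fst' z) + (ε - (1+M)*ηp) < lastc z}
          ∩ {z : Rd (m+1) | lastc z < φ (fst' z) + ε}) := by
      rw [hWdef]
      ext z
      simp [Set.mem_setOf_eq, Set.mem_inter_iff, and_assoc]
    rw [hset]
    exact ((isOpen_absfst ϱ).inter
      ((isOpen_lt ((hφc.comp continuous_fst').add continuous_const) continuous_lastc).inter
        (isOpen_lt continuous_lastc ((hφc.comp continuous_fst').add continuous_const)))).measurableSet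
  -- the inner integral bound
  set B : ℝ := coef * (τ^(m+1) * I0) with hB
  have hB0 : 0 ≤ B := mul_nonneg hcoefnn (mul_nonneg (pow_nonneg hτpos.le _) hI0nn)
  have hinner : ∀ x, x ∈ Sx → (∫ y in Sy, rhoKerEps ε δ β p ρ q lam y x * deriv Φ (⟪gradient u x, ‖x - y‖⁻¹ • (x - y)⟫) * (v x / ‖x - y‖)) ≤ B := by
    intro x hx
    have hi1 : Integrable (fun z : Rd (m+1) => f0 (z - τ⁻¹ • x)) := hf0i.comp_sub_right _
    have hi2 : Integrable (fun y : Rd (m+1) => f0 (τ⁻¹ • y - τ⁻¹ • x)) :=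
      (integrable_comp_smul_iff volume (fun z : Rd (m+1) => f0 (z - τ⁻¹ • x))
        (inv_ne_zero hτpos.ne')).mpr hi1
    have heqf : (fun y : Rd (m+1) => f0 (τ⁻¹ • (y - x)))
        = fun y : Rd (m+1) => f0 (τ⁻¹ • y - τ⁻¹ • x) := by
      funext y
      rw [smul_sub]
    have hi3 : Integrable (fun y : Rd (m+1) => f0 (τ⁻¹ • (y - x))) := by
      rw [heqf]
      exact hi2
    have hi4 : Integrable (fun y : Rd (m+1) => coef * f0 (τ⁻¹ • (y - x))) := hi3.const_mul _
    have hae : ∀ᵐ y ∂(volume.restrict Sy),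
        ‖rhoKerEps ε δ β p ρ q lam y x * deriv Φ (⟪gradient u x, ‖x - y‖⁻¹ • (x - y)⟫) * (v x / ‖x - y‖)‖ ≤ coef * f0 (τ⁻¹ • (y - x)) := by
      rw [ae_restrict_iff' hSymeas]
      exact ae_of_all _ (fun y hy => hgb x hx y hy)
    have hval : ∫ (y : Rd (m+1)), coef * f0 (τ⁻¹ • (y - x)) = B := by
      rw [MeasureTheory.integral_const_mul]
      have hsub : ∫ (y : Rd (m+1)), f0 (τ⁻¹ • (y - x))
          = ∫ (y : Rd (m+1)), f0 (τ⁻¹ • y) :=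
        MeasureTheory.integral_sub_right_eq_self (fun z : Rd (m+1) => f0 (τ⁻¹ • z)) x
      rw [hsub, MeasureTheory.Measure.integral_comp_smul volume f0 τ⁻¹]
      rw [hB, smul_eq_mul, ← hI0]
      congr 1
      rw [finrank_euclideanSpace_fin, inv_pow, inv_inv, abs_of_pos (pow_pos hτpos _)]
    calc (∫ y in Sy, rhoKerEps ε δ β p ρ q lam y x * deriv Φ (⟪gradient u x, ‖x - y‖⁻¹ • (x - y)⟫) * (v x / ‖x - y‖))
        ≤ ‖∫ y in Sy, rhoKerEps ε δ β p ρ q lam y x * deriv Φ (⟪gradient u x, ‖x - y‖⁻¹ • (x - y)⟫) * (v x / ‖x - y‖)‖ := le_abs_self _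
      _ ≤ ∫ y in Sy, ‖rhoKerEps ε δ β p ρ q lam y x * deriv Φ (⟪gradient u x, ‖x - y‖⁻¹ • (x - y)⟫) * (v x / ‖x - y‖)‖ :=
          norm_integral_le_integral_norm _
      _ ≤ ∫ y in Sy, coef * f0 (τ⁻¹ • (y - x)) :=
          integral_mono_of_nonneg (ae_of_all _ fun y => norm_nonneg _) hi4.integrableOn hae
      _ ≤ ∫ (y : Rd (m+1)), coef * f0 (τ⁻¹ • (y - x)) :=
          setIntegral_le_integral hi4 (ae_of_all _ fun y => mul_nonneg hcoefnn (hf0nn _))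
      _ = B := hval
  -- pointwise outer bound
  have hupper : ∀ x ∈ Sx, (∫ y in Sy, rhoKerEps ε δ β p ρ q lam y x * deriv Φ (⟪gradient u x, ‖x - y‖⁻¹ • (x - y)⟫) * (v x / ‖x - y‖)) ≤ W.indicator (fun _ => B) x := by
    intro x hx
    by_cases hxW : x ∈ W
    · rw [Set.indicator_of_mem hxW]
      exact hinner x hx
    · rw [Set.indicator_of_notMem hxW]
      have hzero : ∀ y ∈ Sy, rhoKerEps ε δ β p ρ q lam y x * deriv Φ (⟪gradient u x, ‖x - y‖⁻¹ • (x - y)⟫) * (v x / ‖x - y‖) = 0 := by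
        intro y hy
        by_cases hcond : (ε ≤ ‖x - y‖ / etaD δ q lam y ∧ ‖x - y‖ / etaD δ q lam y < 1)
        · exfalso
          obtain ⟨_, _, _, _, hslab⟩ := key x hx y hy hcond
          apply hxW
          rw [hWdef]
          refine ⟨hx.1, by linarith, hx.2.2⟩
        · rw [rhoKerEps, if_neg hcond, zero_mul, zero_mul]
      have hz2 : ∫ y in Sy, rhoKerEps ε δ β p ρ q lam y x * deriv Φ (⟪gradient u x, ‖x - y‖⁻¹ • (x - y)⟫) * (v x / ‖x - y‖) = 0 := by
        rw [setIntegral_congr_fun hSymeas hzero]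
        simp
      rw [hz2]
  -- volume of the slab
  have hWof := volume_band_le φ hφc ϱ (ε - (1+M)*ηp) ε hϱ.le
  have hWvol : volume W ≤ ENNReal.ofReal ((1+M)*ηp * (2*ϱ)^m) := by
    have hsimp : ε - (ε - (1+M)*ηp) = (1+M)*ηp := by ring
    rw [hsimp] at hWof
    rw [hWdef]
    refine le_trans hWof ?_
    rw [← ENNReal.ofReal_mul (mul_nonneg hM1.le hηpnn)]
  have hWvol_lt : volume W < ⊤ := lt_of_le_of_lt hWvol ENNReal.ofReal_lt_top
  by_cases hint : IntegrableOn (fun x => ∫ y in Sy, rhoKerEps ε δ β p ρ q lam y x * deriv Φ (⟪gradient u x, ‖x - y‖⁻¹ • (x - y)⟫) * (v x / ‖x - y‖)) Sx volume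
  case neg =>
    rw [MeasureTheory.integral_undef hint]
    apply div_nonneg _ (by positivity)
    exact mul_nonneg (mul_nonneg (by linarith) (Real.rpow_nonneg hMu0 _)) hMv0
  case pos =>
    have hindint : IntegrableOn (W.indicator fun _ => B) Sx := by
      apply Integrable.integrableOn
      rw [integrable_indicator_iff hWmeas]
      exact (integrableOn_const_iff (C := B)).mpr (Or.inr hWvol_lt)
    have hstep1 : (∫ x in Sx, ∫ y in Sy, rhoKerEps ε δ β p ρ q lam y x * deriv Φ (⟪gradient u x, ‖x - y‖⁻¹ • (x - y)⟫) * (v x / ‖x - y‖))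
        ≤ ∫ x in Sx, W.indicator (fun _ => B) x :=
      setIntegral_mono_on hint hindint hSxmeas hupper
    have hstep2 : ∫ x in Sx, W.indicator (fun _ => B) x = (volume (Sx ∩ W)).toReal * B := by
      rw [setIntegral_indicator hWmeas, setIntegral_const, smul_eq_mul]; rfl
    have hstep3 : (volume (Sx ∩ W)).toReal ≤ (1+M)*ηp * (2*ϱ)^m := by
      have h1 : volume (Sx ∩ W) ≤ ENNReal.ofReal ((1+M)*ηp * (2*ϱ)^m) :=
        le_trans (measure_mono inter_subset_right) hWvol
      calc (volume (Sx ∩ W)).toReal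
          ≤ (ENNReal.ofReal ((1+M)*ηp * (2*ϱ)^m)).toReal :=
            ENNReal.toReal_mono ENNReal.ofReal_ne_top h1
        _ = (1+M)*ηp * (2*ϱ)^m :=
            ENNReal.toReal_ofReal (by positivity)
    have hτm : τ^(-((m:ℝ)+2)) * τ^(m+1) = τ⁻¹ := by
      rw [← Real.rpow_natCast τ (m+1), ← Real.rpow_add hτpos, ← Real.rpow_neg_one τ]
      congr 1
      push_cast
      ring
    have hfrac : τ⁻¹ * ηp ≤ Cq^N / ε := by
      rw [mul_comm, ← div_eq_mul_inv, div_le_div_iff₀ hτpos hε0]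
      have h1 : δ * q (2*κ0*ε) * ε ≤ δ * (Cq^N * q (c2*ε)) * ε :=
        mul_le_mul_of_nonneg_right (mul_le_mul_of_nonneg_left hdbl hδ.le) hε0.le
      calc ηp * ε = δ * q (2*κ0*ε) * ε := by rw [hηp]
        _ ≤ δ * (Cq^N * q (c2*ε)) * ε := h1
        _ = Cq^N * (ε * (δ * q (c2*ε))) := by ring
        _ = Cq^N * τ := by rw [hτdef, hηm]
    have hfacK : (0:ℝ) ≤ (Mρ+1)*CΦ*2^((m:ℝ)+2)*I0*(2*ϱ)^m*(1+M) * (Mu^(p-1)*Mv) := by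
      refine mul_nonneg ?_ hP
      refine mul_nonneg (mul_nonneg (mul_nonneg (mul_nonneg (mul_nonneg (by linarith) hCΦ0.le)
        (Real.rpow_nonneg (by norm_num) _)) hI0nn) (by positivity)) hM1.le
    have hBle : (1+M)*ηp * (2*ϱ)^m * B ≤ K * (Mu^(p-1)*Mv) / ε := by
      have hexp : (1+M)*ηp * (2*ϱ)^m * B
          = ((Mρ+1)*CΦ*2^((m:ℝ)+2)*I0*(2*ϱ)^m*(1+M) * (Mu^(p-1)*Mv))
            * ((τ^(-((m:ℝ)+2)) * τ^(m+1)) * ηp) := by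
        rw [hB, hcoef]
        ring
      rw [hexp, hτm]
      calc ((Mρ+1)*CΦ*2^((m:ℝ)+2)*I0*(2*ϱ)^m*(1+M) * (Mu^(p-1)*Mv)) * (τ⁻¹ * ηp)
          ≤ ((Mρ+1)*CΦ*2^((m:ℝ)+2)*I0*(2*ϱ)^m*(1+M) * (Mu^(p-1)*Mv)) * (Cq^N / ε) :=
            mul_le_mul_of_nonneg_left hfrac hfacK
        _ = K * (Mu^(p-1)*Mv) / ε := by
            rw [hK]
            ring
    have hfinal2 : K * (Mu^(p-1)*Mv) / ε ≤ (K+1) * Mu^(p-1) * Mv / ε^2 := by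
      rw [div_le_div_iff₀ hε0 (by positivity)]
      have h2 : K*(Mu^(p-1)*Mv)*ε ≤ (K+1)*(Mu^(p-1)*Mv) := by
        calc K*(Mu^(p-1)*Mv)*ε = (K*(Mu^(p-1)*Mv))*ε := by ring
          _ ≤ (K*(Mu^(p-1)*Mv))*1 :=
            mul_le_mul_of_nonneg_left hε1.le (mul_nonneg hKnn hP)
          _ = K*(Mu^(p-1)*Mv) := mul_one _
          _ ≤ (K+1)*(Mu^(p-1)*Mv) := mul_le_mul_of_nonneg_right (by linarith) hP
      calc K*(Mu^(p-1)*Mv)*ε^2 = (K*(Mu^(p-1)*Mv)*ε)*ε := by ring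
        _ ≤ ((K+1)*(Mu^(p-1)*Mv))*ε := mul_le_mul_of_nonneg_right h2 hε0.le
        _ = (K+1)*Mu^(p-1)*Mv*ε := by ring
    calc (∫ x in Sx, ∫ y in Sy, rhoKerEps ε δ β p ρ q lam y x * deriv Φ (⟪gradient u x, ‖x - y‖⁻¹ • (x - y)⟫) * (v x / ‖x - y‖))
        ≤ ∫ x in Sx, W.indicator (fun _ => B) x := hstep1
      _ = (volume (Sx ∩ W)).toReal * B := hstep2
      _ ≤ ((1+M)*ηp * (2*ϱ)^m) * B := mul_le_mul_of_nonneg_right hstep3 hB0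
      _ ≤ K * (Mu^(p-1)*Mv) / ε := hBle
      _ ≤ (K+1) * Mu^(p-1) * Mv / ε^2 := hfinal2
end
end

section
/- Support of boundary-localized convolutions: Assume (A_q), (A_λ), (A_ψ) and (A_δ). Suppose v is continuous on cl Ω and there exists c_v > 0 with supp v ⊂ {x ∈ Ω : η(x) ≥ c_v}. Then K_δ v vanishes on {x ∈ Ω : η(x) < c_v/(1 + κ₁δ)} and K*_δ v vanishes on {x ∈ Ω : η(x) < (1 − κ₁δ)·c_v}; that is, supp K_δ v ⊂ {η ≥ c_v/(1 + κ₁δ)} and supp K*_δ v ⊂ {η ≥ (1 − κ₁δ)·c_v}. -/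
open MeasureTheory Real Set Filter Metric
open scoped ENNReal NNReal Topology RealInnerProductSpace

noncomputable section

/-- The boundary-localized convolution `K_δ u`. -/
def Kconv {d : ℕ} (δ : ℝ) (q : ℝ → ℝ) (lam : Rd d → ℝ) (ψ : ℝ → ℝ) (Ω : Set (Rd d))
    (u : Rd d → ℝ) (x : Rd d) : ℝ :=
  ∫ y in Ω, (etaD δ q lam x) ^ (-(d : ℝ)) * ψ (‖y - x‖ / etaD δ q lam x) * u y

/-- The adjoint boundary-localized convolution `K*_δ u`. -/
def KconvAdj {d : ℕ} (δ : ℝ) (q : ℝ → ℝ) (lam : Rd d → ℝ) (ψ : ℝ → ℝ) (Ω : Set (Rd d))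
    (u : Rd d → ℝ) (x : Rd d) : ℝ :=
  ∫ y in Ω, (etaD δ q lam y) ^ (-(d : ℝ)) * ψ (‖y - x‖ / etaD δ q lam y) * u y

/-- support of boundary-localized convolutions. -/
theorem statement_13 {d : ℕ} (hd : 1 ≤ d)
    (Ω : Set (Rd d)) (hΩo : IsOpen Ω) (hΩne : Ω.Nonempty)
    (hΩb : Bornology.IsBounded Ω) (hΩc : IsConnected Ω)
    -- (A_λ)
    (lam : Rd d → ℝ) (κ0 κ1 : ℝ) (hκ0 : 1 ≤ κ0) (hκ1 : 0 < κ1)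
    (hlam_nonneg : ∀ x ∈ closure Ω, 0 ≤ lam x)
    (hlam_lb : ∀ x ∈ closure Ω, κ0⁻¹ * Metric.infDist x (frontier Ω) ≤ lam x)
    (hlam_ub : ∀ x ∈ closure Ω, lam x ≤ κ0 * Metric.infDist x (frontier Ω))
    (hlam_lip : ∀ x ∈ Ω, ∀ y ∈ Ω, |lam x - lam y| ≤ κ1 * ‖x - y‖)
    -- (A_q)
    (q : ℝ → ℝ) (Cq cq : ℝ) (hq_C1 : ContDiff ℝ 1 q) (hq0 : q 0 = 0)
    (hq_pos : ∀ r : ℝ, 0 < r → 0 < q r ∧ q r ≤ r)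
    (hq_deriv : ∀ r : ℝ, 0 ≤ r → 0 ≤ deriv q r ∧ deriv q r ≤ 1)
    (hcq : 0 < cq) (hq_deriv_pos : ∀ r ∈ Set.Ioc (0:ℝ) cq, 0 < deriv q r)
    (hCq : 1 ≤ Cq) (hq_dbl : ∀ r : ℝ, 0 < r → q (2 * r) ≤ Cq * q r)
    -- (A_δ)
    (δ : ℝ) (hδ : 0 < δ)
    (hδ0 : δ < 1 / (3 * max 1 (max κ1 (Cq * κ0 ^ Real.logb 2 Cq))))
    -- (A_ψ)
    (ψ : ℝ → ℝ) (cψ : ℝ) (hcψ : 0 < cψ)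
    (hψ_nonneg : ∀ t, 0 ≤ ψ t) (hψ_even : ∀ t, ψ (-t) = ψ t)
    (hψ_supp1 : Set.Icc (-cψ) cψ ⊆ tsupport ψ)
    (hψ_supp2 : tsupport ψ ⊆ Set.Ioo (-1) 1)
    (hψ_norm : ∫ x : Rd d, ψ ‖x‖ = 1)
    -- v : continuous on cl Ω with support in {x ∈ Ω : η(x) ≥ c_v}
    (v : Rd d → ℝ) (hv : ContinuousOn v (closure Ω))
    (cv : ℝ) (hcv : 0 < cv)
    (hv_supp : Function.support v ⊆ {x ∈ Ω | cv ≤ q (lam x)}) :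
    (∀ x ∈ Ω, q (lam x) < cv / (1 + κ1 * δ) → Kconv δ q lam ψ Ω v x = 0) ∧
    (∀ x ∈ Ω, q (lam x) < (1 - κ1 * δ) * cv → KconvAdj δ q lam ψ Ω v x = 0) ∧
    (Function.support (Kconv δ q lam ψ Ω v) ∩ Ω ⊆ {x | cv / (1 + κ1 * δ) ≤ q (lam x)}) ∧
    (Function.support (KconvAdj δ q lam ψ Ω v) ∩ Ω ⊆ {x | (1 - κ1 * δ) * cv ≤ q (lam x)}) := by
  -- Lipschitz bound for q on [0,∞)
  have hq_lip : ∀ a b : ℝ, 0 ≤ a → 0 ≤ b → |q a - q b| ≤ |a - b| := by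
    intro a b ha hb
    have := (convex_Ici (0:ℝ)).norm_image_sub_le_of_norm_deriv_le
      (f := q) (C := 1)
      (fun x _ => (hq_C1.differentiable one_ne_zero).differentiableAt)
      (fun x hx => by
        rw [Real.norm_eq_abs, abs_le]
        exact ⟨le_trans (by norm_num) (hq_deriv x hx).1, (hq_deriv x hx).2⟩)
      hb ha
    simpa [Real.norm_eq_abs] using this
  -- q is nonneg on [0,∞)
  have hq_nonneg : ∀ r : ℝ, 0 ≤ r → 0 ≤ q r := by
    intro r hr
    rcases hr.eq_or_lt with h | h
    · simp [← h, hq0]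
    · exact (hq_pos r h).1.le
  -- κ1 * δ < 1/3
  have hM : (0:ℝ) < 3 * max 1 (max κ1 (Cq * κ0 ^ Real.logb 2 Cq)) := by positivity
  have hκδ : κ1 * δ < 1 / 3 := by
    have h1 : κ1 * δ < κ1 * (1 / (3 * max 1 (max κ1 (Cq * κ0 ^ Real.logb 2 Cq)))) :=
      mul_lt_mul_of_pos_left hδ0 hκ1
    have h2 : κ1 ≤ max 1 (max κ1 (Cq * κ0 ^ Real.logb 2 Cq)) :=
      le_max_of_le_right (le_max_left _ _)
    calc κ1 * δ < κ1 * (1 / (3 * max 1 (max κ1 (Cq * κ0 ^ Real.logb 2 Cq)))) := h1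
      _ = κ1 / (3 * max 1 (max κ1 (Cq * κ0 ^ Real.logb 2 Cq))) := by ring
      _ ≤ max 1 (max κ1 (Cq * κ0 ^ Real.logb 2 Cq)) /
          (3 * max 1 (max κ1 (Cq * κ0 ^ Real.logb 2 Cq))) := by
          exact div_le_div_of_nonneg_right h2 hM.le
      _ = 1 / 3 := by
          rw [div_eq_div_iff hM.ne' (by norm_num)]
          ring
  have hone : (0:ℝ) < 1 + κ1 * δ := by nlinarith [mul_pos hκ1 hδ]
  have hone' : (0:ℝ) < 1 - κ1 * δ := by linarith
  -- ψ vanishes outside (-1,1)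
  have hψ_zero : ∀ t : ℝ, 1 ≤ t → ψ t = 0 := by
    intro t ht
    by_contra h
    have : t ∈ tsupport ψ := subset_tsupport ψ h
    have := hψ_supp2 this
    exact absurd this.2 (not_lt.2 ht)
  -- d ≥ 1 so exponent nonzero
  have hdne : -(d:ℝ) ≠ 0 := by
    simp only [ne_eq, neg_eq_zero, Nat.cast_eq_zero]
    omega
  -- first claim
  have claim1 : ∀ x ∈ Ω, q (lam x) < cv / (1 + κ1 * δ) → Kconv δ q lam ψ Ω v x = 0 := by
    intro x hx hqx
    have hqx0 : 0 ≤ q (lam x) := hq_nonneg _ (hlam_nonneg x (subset_closure hx))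
    rw [Kconv]
    apply setIntegral_eq_zero_of_forall_eq_zero
    intro y hy
    rcases hqx0.eq_or_lt with h0 | h0
    · rw [etaD, ← h0, mul_zero, Real.zero_rpow hdne, zero_mul, zero_mul]
    · have hE : 0 < etaD δ q lam x := mul_pos hδ h0
      by_cases hψy : ψ (‖y - x‖ / etaD δ q lam x) = 0
      · rw [hψy, mul_zero, zero_mul]
      · -- then ‖y - x‖ < etaD x
        have hlt : ‖y - x‖ / etaD δ q lam x < 1 := by
          by_contra h
          exact hψy (hψ_zero _ (not_lt.1 h))
        have hyx : ‖y - x‖ < etaD δ q lam x := by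
          rwa [div_lt_one hE] at hlt
        have hvy : v y = 0 := by
          by_contra hvy
          have hy' := hv_supp hvy
          have hqy : cv ≤ q (lam y) := hy'.2
          have h1 : |q (lam y) - q (lam x)| ≤ |lam y - lam x| :=
            hq_lip _ _ (hlam_nonneg y (subset_closure hy)) (hlam_nonneg x (subset_closure hx))
          have h2 : |lam y - lam x| ≤ κ1 * ‖y - x‖ := hlam_lip y hy x hx
          have h3 : q (lam y) ≤ q (lam x) + κ1 * ‖y - x‖ := by
            have := abs_le.1 (h1.trans h2)
            linarith [this.1, this.2]
          have h4 : κ1 * ‖y - x‖ < κ1 * (δ * q (lam x)) :=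
            mul_lt_mul_of_pos_left hyx hκ1
          have h5 : q (lam x) * (1 + κ1 * δ) < cv := (lt_div_iff₀ hone).1 hqx
          nlinarith
        rw [hvy, mul_zero]
  -- second claim
  have claim2 : ∀ x ∈ Ω, q (lam x) < (1 - κ1 * δ) * cv → KconvAdj δ q lam ψ Ω v x = 0 := by
    intro x hx hqx
    rw [KconvAdj]
    apply setIntegral_eq_zero_of_forall_eq_zero
    intro y hy
    have hqy0 : 0 ≤ q (lam y) := hq_nonneg _ (hlam_nonneg y (subset_closure hy))
    rcases hqy0.eq_or_lt with h0 | h0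
    · rw [etaD, ← h0, mul_zero, Real.zero_rpow hdne, zero_mul, zero_mul]
    · have hE : 0 < etaD δ q lam y := mul_pos hδ h0
      by_cases hψy : ψ (‖y - x‖ / etaD δ q lam y) = 0
      · rw [hψy, mul_zero, zero_mul]
      · have hlt : ‖y - x‖ / etaD δ q lam y < 1 := by
          by_contra h
          exact hψy (hψ_zero _ (not_lt.1 h))
        have hyx : ‖y - x‖ < etaD δ q lam y := by
          rwa [div_lt_one hE] at hlt
        have hvy : v y = 0 := by
          by_contra hvy
          have hy' := hv_supp hvy
          have hqy : cv ≤ q (lam y) := hy'.2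
          have h1 : |q (lam y) - q (lam x)| ≤ |lam y - lam x| :=
            hq_lip _ _ (hlam_nonneg y (subset_closure hy)) (hlam_nonneg x (subset_closure hx))
          have h2 : |lam y - lam x| ≤ κ1 * ‖y - x‖ := hlam_lip y hy x hx
          have h3 : q (lam y) - κ1 * ‖y - x‖ ≤ q (lam x) := by
            have := abs_le.1 (h1.trans h2)
            linarith [this.1, this.2]
          have h4 : κ1 * ‖y - x‖ < κ1 * (δ * q (lam y)) :=
            mul_lt_mul_of_pos_left hyx hκ1
          nlinarith
        rw [hvy, mul_zero]
  refine ⟨claim1, claim2, ?_, ?_⟩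
  · rintro x ⟨hxs, hxΩ⟩
    by_contra h
    exact hxs (claim1 x hxΩ (not_le.1 h))
  · rintro x ⟨hxs, hxΩ⟩
    by_contra h
    exact hxs (claim2 x hxΩ (not_le.1 h))
end
end
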